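/- arXiv:1512.08344 — 5 statements merged into one kernel-verified Lean document; each statement's English description precedes it below -/
import Mathlib

section
/- If G is a connected graph that contains a cut-vertex, then λ(G) ≤ (1/2)·Δ(G), where Δ(G) is the maximum degree of G. -/
open SimpleGraph

section Defs

variable {V : Type*}

/-- The set of edges of `G` with one endpoint in `X` and the other outside `X`. -/
def edgeBoundary (G : SimpleGraph V) (X : Set V) : Set (Sym2 V) :=
  {e | e ∈ G.edgeSet ∧ ∃ u ∈ X, ∃ v ∈ Xᶜ, e = s(u, v)}

/-- The edge-connectivity `λ(G)`: the minimum number of edges whose removal disconnects `G`. -/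
noncomputable def edgeConn (G : SimpleGraph V) : ℕ :=
  sInf {k | ∃ F : Set (Sym2 V), F ⊆ G.edgeSet ∧ F.ncard = k ∧ ¬(G.deleteEdges F).Connected}

/-- `F` is a restricted edge-cut of `G`: removing `F` disconnects `G` and leaves no
isolated vertices. -/
def IsRestrictedEdgeCut (G : SimpleGraph V) (F : Set (Sym2 V)) : Prop :=
  F ⊆ G.edgeSet ∧ ¬(G.deleteEdges F).Connected ∧ ∀ v : V, ∃ w : V, (G.deleteEdges F).Adj v w

/-- The restricted edge-connectivity `λ'(G)`. -/
noncomputable def restrictedEdgeConn (G : SimpleGraph V) : ℕ :=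
  sInf {k | ∃ F : Set (Sym2 V), IsRestrictedEdgeCut G F ∧ F.ncard = k}

/-- The vertex-connectivity `κ(G)`: the minimum size of a set of vertices whose removal
leaves a disconnected graph or a graph with at most one vertex. -/
noncomputable def vertexConn (G : SimpleGraph V) : ℕ :=
  sInf {k | ∃ S : Set V, S.ncard = k ∧
    (¬(G.induce (Sᶜ : Set V)).Connected ∨ (Sᶜ : Set V).ncard ≤ 1)}

/-- The minimum edge-degree `ξ(G) = min {d(u) + d(v) - 2 : uv ∈ E(G)}`. -/
noncomputable def minEdgeDegree (G : SimpleGraph V) : ℕ :=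
  sInf {k | ∃ u v : V, G.Adj u v ∧ (G.neighborSet u).ncard + (G.neighborSet v).ncard - 2 = k}

/-- `G` is `λ'`-optimal if `λ'(G) = ξ(G)`. -/
def LambdaPrimeOptimal (G : SimpleGraph V) : Prop :=
  restrictedEdgeConn G = minEdgeDegree G

/-- The replacement product of `G1` and `G2` with respect to an edge-labelling `ℓ`,
where `ℓ x i` is the other endpoint of the edge of `G1` labelled `i` at the vertex `x`.
Vertices `(x, i)` and `(y, j)` are adjacent iff either `x = y` and `i j ∈ E(G2)`, or
`x y ∈ E(G1)` and the edge `x y` is labelled `i` at `x` and `j` at `y`. -/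
def replacementProduct {V1 V2 : Type*} (G1 : SimpleGraph V1) (G2 : SimpleGraph V2)
    (ℓ : V1 → V2 → V1) : SimpleGraph (V1 × V2) where
  Adj p q := (p.1 = q.1 ∧ G2.Adj p.2 q.2) ∨
    (G1.Adj p.1 q.1 ∧ ℓ p.1 p.2 = q.1 ∧ ℓ q.1 q.2 = p.1)
  symm := by
    constructor
    rintro p q (⟨h1, h2⟩ | ⟨h1, h2, h3⟩)
    · exact Or.inl ⟨h1.symm, h2.symm⟩
    · exact Or.inr ⟨h1.symm, h3, h2⟩
  loopless := by
    constructor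
    rintro p (⟨_, h⟩ | ⟨h, _⟩)
    · exact G2.irrefl h
    · exact G1.irrefl h

/-- `ℓ` is a valid edge-labelling of `G1` for the replacement product:
for each vertex `x`, `ℓ x` is injective and `ℓ x i` is always a neighbour of `x`
(hence `ℓ x` enumerates the neighbours of `x` when `G1` is `|V2|`-regular). -/
def IsRPLabelling {V1 V2 : Type*} (G1 : SimpleGraph V1) (ℓ : V1 → V2 → V1) : Prop :=
  (∀ x, Function.Injective (ℓ x)) ∧ ∀ x i, G1.Adj x (ℓ x i)

end Defs

/-- Lemma 3.3. If a connected graph `G` contains a cut-vertex, then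
`λ(G) ≤ Δ(G)/2`, i.e. `2·λ(G) ≤ Δ(G)`. -/
theorem edgeConn_le_half_maxDegree_of_cutVertex
    {V : Type*} [Fintype V] (G : SimpleGraph V) [DecidableRel G.Adj]
    (hconn : G.Connected)
    (hcut : ∃ v : V, ¬(G.induce ({v}ᶜ : Set V)).Connected) :
    2 * edgeConn G ≤ G.maxDegree := by
  classical
  obtain ⟨v, hv⟩ := hcut
  by_cases hne : Nonempty ({v}ᶜ : Set V)
  · -- main case
    have hpre : ¬(G.induce ({v}ᶜ : Set V)).Preconnected := by
      intro h; exact hv ⟨h⟩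
    rw [SimpleGraph.Preconnected] at hpre
    push_neg at hpre
    obtain ⟨a, b, hab⟩ := hpre
    set R : Set V := {w | ∃ hw : w ∈ ({v}ᶜ : Set V),
      (G.induce ({v}ᶜ : Set V)).Reachable a ⟨w, hw⟩} with hR
    set N₁ : Set V := {u | G.Adj v u ∧ u ∈ R} with hN₁
    set N₂ : Set V := {u | G.Adj v u ∧ u ∉ R} with hN₂
    set F₁ : Set (Sym2 V) := (fun u => s(v, u)) '' N₁ with hF₁
    set F₂ : Set (Sym2 V) := (fun u => s(v, u)) '' N₂ with hF₂
    have hvR : v ∉ R := by rintro ⟨hw, -⟩; simp at hw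
    -- injectivity on neighbor sets
    have hinj : ∀ (N : Set V), (∀ u ∈ N, G.Adj v u) →
        Set.InjOn (fun u => s(v, u)) N := by
      intro N hN u hu u' hu' h
      simp only [Sym2.eq, Sym2.rel_iff', Prod.mk.injEq, Prod.swap_prod_mk] at h
      rcases h with ⟨-, h⟩ | ⟨-, h⟩
      · exact h
      · exact absurd h (hN u hu).ne'
    have hadj₁ : ∀ u ∈ N₁, G.Adj v u := fun u hu => hu.1
    have hadj₂ : ∀ u ∈ N₂, G.Adj v u := fun u hu => hu.1
    -- F ⊆ edgeSet
    have hsub : ∀ (N : Set V), (∀ u ∈ N, G.Adj v u) →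
        ((fun u => s(v, u)) '' N) ⊆ G.edgeSet := by
      rintro N hN e ⟨u, hu, rfl⟩
      exact hN u hu
    -- closure lemmas
    have key₁ : ∀ w u, w ∈ R → (G.deleteEdges F₁).Adj w u → u ∈ R := by
      intro w u hw hadj
      rw [SimpleGraph.deleteEdges_adj] at hadj
      obtain ⟨hadj, hnot⟩ := hadj
      by_cases huv : u = v
      · exfalso; apply hnot
        subst huv
        refine ⟨w, ⟨hadj.symm, hw⟩, ?_⟩
        exact Sym2.eq_swap
      · obtain ⟨hwv, hreach⟩ := hw
        refine ⟨by simpa using huv, hreach.trans (SimpleGraph.Adj.reachable ?_)⟩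
        exact hadj
    have key₂ : ∀ w u, (w ≠ v ∧ w ∉ R) → (G.deleteEdges F₂).Adj w u →
        (u ≠ v ∧ u ∉ R) := by
      intro w u ⟨hwv, hwR⟩ hadj
      rw [SimpleGraph.deleteEdges_adj] at hadj
      obtain ⟨hadj, hnot⟩ := hadj
      by_cases huv : u = v
      · exfalso; apply hnot
        subst huv
        refine ⟨w, ⟨hadj.symm, hwR⟩, Sym2.eq_swap⟩
      · refine ⟨huv, ?_⟩
        rintro ⟨huc, hreach⟩
        apply hwR
        refine ⟨by simpa using hwv, hreach.trans (SimpleGraph.Adj.reachable ?_)⟩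
        show G.Adj u w
        exact hadj.symm
    -- walk closure
    have walk₁ : ∀ {x y : V} (_ : (G.deleteEdges F₁).Walk x y), x ∈ R → y ∈ R := by
      intro x y p
      induction p with
      | nil => exact id
      | cons h _ ih => intro hx; exact ih (key₁ _ _ hx h)
    have walk₂ : ∀ {x y : V} (_ : (G.deleteEdges F₂).Walk x y),
        (x ≠ v ∧ x ∉ R) → (y ≠ v ∧ y ∉ R) := by
      intro x y p
      induction p with
      | nil => exact id
      | cons h _ ih => intro hx; exact ih (key₂ _ _ hx h)
    -- disconnections
    have hdisc₁ : ¬(G.deleteEdges F₁).Connected := by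
      intro h
      obtain ⟨p⟩ := h.preconnected (a : V) v
      have haR : (a : V) ∈ R := ⟨a.2, SimpleGraph.Reachable.refl _⟩
      exact hvR (walk₁ p haR)
    have hdisc₂ : ¬(G.deleteEdges F₂).Connected := by
      intro h
      obtain ⟨p⟩ := h.preconnected (b : V) v
      have hbS : (b : V) ≠ v ∧ (b : V) ∉ R := by
        refine ⟨fun h => b.2 (by simp [h]), ?_⟩
        rintro ⟨hbc, hreach⟩
        exact hab (by convert hreach)
      exact (walk₂ p hbS).1 rfl
    -- edgeConn bounds
    have hle₁ : edgeConn G ≤ N₁.ncard := by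
      apply Nat.sInf_le
      exact ⟨F₁, hsub _ hadj₁, (Set.ncard_image_of_injOn (hinj _ hadj₁)), hdisc₁⟩
    have hle₂ : edgeConn G ≤ N₂.ncard := by
      apply Nat.sInf_le
      exact ⟨F₂, hsub _ hadj₂, (Set.ncard_image_of_injOn (hinj _ hadj₂)), hdisc₂⟩
    -- cardinality sum
    have hunion : N₁ ∪ N₂ = G.neighborSet v := by
      ext u; simp only [hN₁, hN₂, Set.mem_union, Set.mem_setOf_eq,
        SimpleGraph.mem_neighborSet]
      tauto
    have hdisj : Disjoint N₁ N₂ := by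
      rw [Set.disjoint_left]; rintro u ⟨-, hu⟩ ⟨-, hu'⟩; exact hu' hu
    have hsum : N₁.ncard + N₂.ncard = G.degree v := by
      rw [← Set.ncard_union_eq hdisj (Set.toFinite _) (Set.toFinite _), hunion]
      rw [Set.ncard_eq_toFinset_card']
      have h : (G.neighborSet v).toFinset = G.neighborFinset v := by ext; simp
      rw [h]
      rfl
    have := G.degree_le_maxDegree v
    omega
  · -- subsingleton case: edgeConn = 0
    have hsub : ∀ w : V, w = v := by
      intro w; by_contra hw
      exact hne ⟨⟨w, by simp [hw]⟩⟩
    have h0 : edgeConn G = 0 := by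
      unfold edgeConn
      convert Nat.sInf_empty
      rw [Set.eq_empty_iff_forall_notMem]
      rintro k ⟨F, hF, hcard, hnc⟩
      haveI : Nonempty V := ⟨v⟩
      exact hnc ⟨fun x y => by rw [hsub x, hsub y]⟩
    omega
end

section
/- For any n-regular connected graph G, λ(G®K_n) = λ(G), where K_n is the complete graph on n vertices. -/
open SimpleGraph

section Helpers
open Set

lemma reach_mono {W : Type*} {H : SimpleGraph W} {Z : Set W}
    (hZ : ∀ a b, H.Adj a b → a ∈ Z → b ∈ Z) {a b : W} (h : H.Reachable a b) (ha : a ∈ Z) :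
    b ∈ Z := by
  obtain ⟨p⟩ := h
  induction p with
  | nil => exact ha
  | cons h' p ih => exact ih (hZ _ _ h' ha)

lemma edgeConn_le' {W : Type*} (H : SimpleGraph W) (F : Set (Sym2 W)) (h1 : F ⊆ H.edgeSet)
    (h2 : ¬(H.deleteEdges F).Connected) : edgeConn H ≤ F.ncard :=
  Nat.sInf_le ⟨F, h1, rfl, h2⟩

lemma boundary_disconnects {W : Type*} (H : SimpleGraph W) (Z : Set W) {a b : W}
    (ha : a ∈ Z) (hb : b ∉ Z) : ¬(H.deleteEdges (edgeBoundary H Z)).Connected := by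
  intro hc
  refine hb (reach_mono (fun u w huw hu => ?_) (hc.preconnected a b) ha)
  rw [SimpleGraph.deleteEdges_adj] at huw
  by_contra hw
  exact huw.2 ⟨(SimpleGraph.mem_edgeSet H).2 huw.1, u, hu, w, hw, rfl⟩

lemma ncard_prod' {α β : Type*} (s : Set α) (t : Set β) : (s ×ˢ t).ncard = s.ncard * t.ncard := by
  rw [← Nat.card_coe_set_eq, ← Nat.card_coe_set_eq, ← Nat.card_coe_set_eq,
    Nat.card_congr (Equiv.Set.prod s t), Nat.card_prod]

end Helpers

section Dir1
open Set

lemma rp_adj {V1 V2 : Type*} (G1 : SimpleGraph V1) (G2 : SimpleGraph V2) (ℓ : V1 → V2 → V1)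
    (p q : V1 × V2) : (replacementProduct G1 G2 ℓ).Adj p q ↔
      (p.1 = q.1 ∧ G2.Adj p.2 q.2) ∨
      (G1.Adj p.1 q.1 ∧ ℓ p.1 p.2 = q.1 ∧ ℓ q.1 q.2 = p.1) := Iff.rfl

lemma dir1 {V1 V2 : Type*} [Fintype V1] [Fintype V2]
    (G : SimpleGraph V1) (ℓ : V1 → V2 → V1)
    (hℓ : IsRPLabelling G ℓ) (lab : V1 → V1 → V2)
    (hlab : ∀ x y, G.Adj x y → ℓ x (lab x y) = y)
    (i0 : V2)
    (F : Set (Sym2 V1)) (hF : F ⊆ G.edgeSet) (hd : ¬(G.deleteEdges F).Connected) :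
    edgeConn (replacementProduct G (⊤ : SimpleGraph V2) ℓ) ≤ F.ncard := by
  classical
  set P := replacementProduct G (⊤ : SimpleGraph V2) ℓ with hP
  set f : Sym2 V1 → Sym2 (V1 × V2) :=
    Sym2.lift ⟨fun x y => s((x, lab x y), (y, lab y x)), fun x y => Sym2.eq_swap⟩ with hf
  set F' := f '' F with hF'
  have hsub : F' ⊆ P.edgeSet := by
    rintro e' ⟨e, he, rfl⟩
    induction e using Sym2.ind with
    | _ x y =>
      have hadj : G.Adj x y := hF he
      simp only [hf, Sym2.lift_mk]
      exact (SimpleGraph.mem_edgeSet _).2 (Or.inr ⟨hadj, hlab x y hadj, hlab y x hadj.symm⟩)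
  have hcard : F'.ncard ≤ F.ncard := Set.ncard_image_le (Set.toFinite F)
  have hdisc : ¬(P.deleteEdges F').Connected := by
    intro hc
    have hV1 : Nonempty V1 := ⟨(hc.nonempty.some).1⟩
    rw [SimpleGraph.connected_iff] at hd
    push_neg at hd
    have hpre : ¬(G.deleteEdges F).Preconnected := by
      intro h; exact (hd h).false hV1.some
    rw [SimpleGraph.Preconnected] at hpre
    push_neg at hpre
    obtain ⟨a, b, hab⟩ := hpre
    have hr : (P.deleteEdges F').Reachable (a, i0) (b, i0) := hc.preconnected _ _
    have hb : ((b, i0) : V1 × V2) ∈ {p : V1 × V2 | (G.deleteEdges F).Reachable a p.1} := by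
      refine reach_mono (fun p q hpq hp => ?_) hr (SimpleGraph.Reachable.refl a)
      rw [SimpleGraph.deleteEdges_adj] at hpq
      rcases (rp_adj G ⊤ ℓ p q).1 hpq.1 with ⟨h1, _⟩ | ⟨hadj, hl1, hl2⟩
      · simpa [← h1] using hp
      · have hnotF : s(p.1, q.1) ∉ F := by
          intro hmem
          apply hpq.2
          have h3 : lab p.1 q.1 = p.2 := hℓ.1 p.1 ((hlab p.1 q.1 hadj).trans hl1.symm)
          have h4 : lab q.1 p.1 = q.2 := hℓ.1 q.1 ((hlab q.1 p.1 hadj.symm).trans hl2.symm)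
          have : f s(p.1, q.1) ∈ F' := ⟨_, hmem, rfl⟩
          simpa [hf, Sym2.lift_mk, h3, h4] using this
        exact hp.trans (SimpleGraph.Adj.reachable ((SimpleGraph.deleteEdges_adj).2 ⟨hadj, hnotF⟩))
    exact hab hb
  exact le_trans (edgeConn_le' P F' hsub hdisc) hcard

end Dir1

section Dir2
open Set

lemma dir2 {V1 V2 : Type*} [Fintype V1] [Fintype V2] {n : ℕ}
    (G : SimpleGraph V1) (ℓ : V1 → V2 → V1)
    (hℓ : IsRPLabelling G ℓ) (lab : V1 → V1 → V2)
    (hlab : ∀ x y, G.Adj x y → ℓ x (lab x y) = y)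
    (i0 : V2)
    (_hconn : G.Connected)
    (hreg : ∀ x : V1, (G.neighborSet x).ncard = n)
    (hcard : Fintype.card V2 = n)
    (a0 b0 : V1) (hab : a0 ≠ b0) :
    edgeConn G ≤ edgeConn (replacementProduct G (⊤ : SimpleGraph V2) ℓ) := by
  classical
  set P := replacementProduct G (⊤ : SimpleGraph V2) ℓ with hPdef
  by_contra hlt
  push_neg at hlt
  -- λ(G) ≤ n
  have hGn : edgeConn G ≤ n := by
    have hdisc : ¬(G.deleteEdges (edgeBoundary G {a0})).Connected :=
      boundary_disconnects G {a0} (Set.mem_singleton a0) (by simpa using (Ne.symm hab))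
    have hsub : edgeBoundary G {a0} ⊆ (fun w => s(a0, w)) '' (G.neighborSet a0) := by
      rintro e ⟨heE, u, hu, w, hw, rfl⟩
      rw [Set.mem_singleton_iff] at hu
      subst hu
      exact ⟨w, (SimpleGraph.mem_edgeSet G).1 heE, rfl⟩
    calc edgeConn G ≤ (edgeBoundary G {a0}).ncard :=
            edgeConn_le' G _ (fun e he => he.1) hdisc
      _ ≤ ((fun w => s(a0, w)) '' (G.neighborSet a0)).ncard :=
            Set.ncard_le_ncard hsub (Set.toFinite _)
      _ ≤ (G.neighborSet a0).ncard := Set.ncard_image_le (Set.toFinite _)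
      _ = n := hreg a0
  -- the cut set of P is nonempty; get a minimum cut F'
  have hPne : {k | ∃ F : Set (Sym2 (V1 × V2)), F ⊆ P.edgeSet ∧ F.ncard = k ∧
      ¬(P.deleteEdges F).Connected}.Nonempty := by
    refine ⟨(edgeBoundary P {(a0, i0)}).ncard, edgeBoundary P {(a0, i0)}, fun e he => he.1, rfl, ?_⟩
    exact boundary_disconnects P {(a0, i0)} (b := ((b0, i0) : V1 × V2)) (Set.mem_singleton _)
      (by intro h; rw [Set.mem_singleton_iff, Prod.mk.injEq] at h; exact hab h.1.symm)
  obtain ⟨F', hF'sub, hF'card, hF'disc⟩ := Nat.sInf_mem hPne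
  rw [show sInf _ = edgeConn P from rfl] at hF'card
  have hk : F'.ncard < edgeConn G := by rw [hF'card]; exact hlt
  by_cases hsplit : ∀ (x : V1) (i j : V2), (P.deleteEdges F').Reachable (x, i) (x, j)
  · -- no cloud is split: project the cut
    set F := (Sym2.map Prod.fst '' F') ∩ G.edgeSet with hFdef
    have hFsub : F ⊆ G.edgeSet := Set.inter_subset_right
    have hFcard : F.ncard ≤ F'.ncard :=
      le_trans (Set.ncard_le_ncard Set.inter_subset_left (Set.toFinite _))
        (Set.ncard_image_le (Set.toFinite _))
    have hFdisc : ¬(G.deleteEdges F).Connected := by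
      intro hGFc
      rw [SimpleGraph.connected_iff] at hF'disc
      push_neg at hF'disc
      have hpre : ¬(P.deleteEdges F').Preconnected := fun h => (hF'disc h).false (a0, i0)
      rw [SimpleGraph.Preconnected] at hpre
      push_neg at hpre
      obtain ⟨u, v, huv⟩ := hpre
      apply huv
      have hv1 : v.1 ∈ {y : V1 | (P.deleteEdges F').Reachable u (y, i0)} := by
        refine reach_mono (fun y y' hyy' hy => ?_) (hGFc.preconnected u.1 v.1) ?_
        · rw [SimpleGraph.deleteEdges_adj] at hyy'
          obtain ⟨hadj, hnF⟩ := hyy'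
          have hext : (P.deleteEdges F').Adj (y, lab y y') (y', lab y' y) := by
            rw [SimpleGraph.deleteEdges_adj]
            refine ⟨Or.inr ⟨hadj, hlab y y' hadj, hlab y' y hadj.symm⟩, fun hmem => ?_⟩
            exact hnF ⟨⟨s((y, lab y y'), (y', lab y' y)), hmem, by simp⟩,
              (SimpleGraph.mem_edgeSet G).2 hadj⟩
          exact hy.trans (((hsplit y i0 (lab y y')).trans hext.reachable).trans
            (hsplit y' (lab y' y) i0))
        · simpa using hsplit u.1 u.2 i0
      simpa using hv1.trans (hsplit v.1 i0 v.2)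
    have : edgeConn G ≤ F.ncard := edgeConn_le' G F hFsub hFdisc
    omega
  · -- some cloud x is split
    push_neg at hsplit
    obtain ⟨x, i, j, hij⟩ := hsplit
    set S := {c : V2 | (P.deleteEdges F').Reachable (x, i) (x, c)} with hSdef
    have hiS : i ∈ S := SimpleGraph.Reachable.refl _
    have hjS : j ∉ S := hij
    set ES := (fun p : V2 × V2 => s(((x, p.1) : V1 × V2), (x, p.2))) '' (S ×ˢ Sᶜ) with hESdef
    have hES_sub : ES ⊆ F' := by
      rintro e ⟨⟨c, d⟩, ⟨hc, hd⟩, rfl⟩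
      by_contra h'
      have hadj : (P.deleteEdges F').Adj (x, c) (x, d) := by
        rw [SimpleGraph.deleteEdges_adj]
        exact ⟨Or.inl ⟨rfl, (SimpleGraph.top_adj _ _).2 (fun hcd => hd (hcd ▸ hc))⟩, h'⟩
      exact hd (hc.trans hadj.reachable)
    have hES_card : ES.ncard = S.ncard * (Sᶜ : Set V2).ncard := by
      rw [hESdef, Set.ncard_image_of_injOn, ncard_prod']
      intro p hp q hq heq
      obtain ⟨c, d⟩ := p
      obtain ⟨c', d'⟩ := q
      rw [Set.mem_prod] at hp hq
      simp only [Sym2.eq_iff, Prod.mk.injEq] at heq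
      rcases heq with ⟨⟨-, h1⟩, ⟨-, h2⟩⟩ | ⟨⟨-, h1⟩, ⟨-, h2⟩⟩
      · simp [h1, h2]
      · exact absurd (h1 ▸ hp.1) (by simpa using hq.2)
    have hS1 : 1 ≤ S.ncard := (Set.ncard_pos (Set.toFinite _)).2 ⟨i, hiS⟩
    have hSc1 : 1 ≤ (Sᶜ : Set V2).ncard := (Set.ncard_pos (Set.toFinite _)).2 ⟨j, hjS⟩
    have hsum : S.ncard + (Sᶜ : Set V2).ncard = n := by
      rw [Set.ncard_add_ncard_compl, Nat.card_eq_fintype_card, hcard]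
    have harith : n - 1 ≤ S.ncard * (Sᶜ : Set V2).ncard := by
      obtain ⟨s', hs'⟩ := Nat.exists_eq_add_of_le hS1
      obtain ⟨t', ht'⟩ := Nat.exists_eq_add_of_le hSc1
      rw [hs', ht']
      have h1 : n - 1 ≤ 1 + s' + t' := by omega
      have h2 : 1 + s' + t' ≤ (1 + s') * (1 + t') := by nlinarith
      exact le_trans h1 h2
    have hESF : ES.ncard ≤ F'.ncard := Set.ncard_le_ncard hES_sub (Set.toFinite _)
    have hkn1 : F'.ncard = n - 1 := by omega
    have hF'eq : ES = F' := Set.eq_of_subset_of_ncard_le hES_sub (by omega) (Set.toFinite _)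
    -- edges with an endpoint outside cloud x survive
    have hsurvx : ∀ p q : V1 × V2, P.Adj p q → p.1 ≠ x → (P.deleteEdges F').Adj p q := by
      intro p q hadj hpx
      rw [SimpleGraph.deleteEdges_adj]
      refine ⟨hadj, fun hmem => ?_⟩
      rw [← hF'eq] at hmem
      obtain ⟨⟨c, d⟩, _, heq⟩ := hmem
      rcases Sym2.eq_iff.1 heq.symm with ⟨h1, -⟩ | ⟨h1, -⟩
      · exact hpx (congrArg Prod.fst h1)
      · exact hpx (congrArg Prod.fst h1)
    set X := {y : V1 | y ≠ x ∧ ∃ m, (P.deleteEdges F').Reachable (x, i) (y, m)} with hXdef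
    have hXall : ∀ y ∈ X, ∀ m, (P.deleteEdges F').Reachable (x, i) (y, m) := by
      rintro y ⟨hyx, m0, hr⟩ m
      by_cases hm : m = m0
      · exact hm ▸ hr
      · exact hr.trans (hsurvx (y, m0) (y, m)
          (Or.inl ⟨rfl, by simpa using Ne.symm hm⟩) hyx).reachable
    have hstep : ∀ y y', G.Adj y y' → y ≠ x → y' ≠ x → y ∈ X → y' ∈ X := by
      intro y y' hadj hyx hy'x hy
      refine ⟨hy'x, lab y' y, (hXall y hy (lab y y')).trans ?_⟩
      exact (hsurvx (y, lab y y') (y', lab y' y)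
        (Or.inr ⟨hadj, hlab y y' hadj, hlab y' y hadj.symm⟩) hyx).reachable
    have hstepx : ∀ c ∈ S, ℓ x c ∈ X := by
      intro c hc
      have hadj : G.Adj x (ℓ x c) := hℓ.2 x c
      have hwx : ℓ x c ≠ x := hadj.ne'
      refine ⟨hwx, lab (ℓ x c) x, hc.trans ?_⟩
      exact ((hsurvx (ℓ x c, lab (ℓ x c) x) (x, c)
        (Or.inr ⟨hadj.symm, hlab (ℓ x c) x hadj.symm, rfl⟩) hwx).symm).reachable
    by_cases hY : ∀ y : V1, y ≠ x → y ∈ X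
    · -- everything is reachable from (x, i): P \ F' is connected, contradiction
      apply hF'disc
      have hall : ∀ p : V1 × V2, (P.deleteEdges F').Reachable (x, i) p := by
        rintro ⟨y, m⟩
        by_cases hyx : y = x
        · subst hyx
          by_cases hm : m ∈ S
          · exact hm
          · have hadj : G.Adj y (ℓ y m) := hℓ.2 y m
            have hwx : ℓ y m ≠ y := hadj.ne'
            have h1 := hXall (ℓ y m) (hY (ℓ y m) hwx) (lab (ℓ y m) y)
            exact h1.trans (hsurvx (ℓ y m, lab (ℓ y m) y) (y, m)
              (Or.inr ⟨hadj.symm, hlab (ℓ y m) y hadj.symm, rfl⟩) hwx).reachable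
        · exact hXall y (hY y hyx) m
      have : Nonempty (V1 × V2) := ⟨(x, i)⟩
      exact ⟨fun p q => (hall p).symm.trans (hall q)⟩
    · push_neg at hY
      obtain ⟨y0, hy0x, hy0X⟩ := hY
      set Z := insert x X with hZdef
      have hbd_sub : edgeBoundary G Z ⊆ (fun c => s(x, ℓ x c)) '' (Sᶜ : Set V2) := by
        rintro e ⟨heE, u, huZ, w, hwZ, rfl⟩
        have hadj : G.Adj u w := (SimpleGraph.mem_edgeSet G).1 heE
        have hwx : w ≠ x := fun h => hwZ (h ▸ Set.mem_insert x X)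
        have hwX : w ∉ X := fun h => hwZ (Set.mem_insert_of_mem x h)
        have hux : u = x := by
          by_contra hux
          rcases huZ with h | h
          · exact hux h
          · exact hwX (hstep u w hadj hux hwx h)
        subst hux
        have hcS : lab u w ∉ S := by
          intro hcS
          have := hstepx (lab u w) hcS
          rw [hlab u w hadj] at this
          exact hwX this
        exact ⟨lab u w, hcS, by simp [hlab u w hadj]⟩
      have hbd_card : (edgeBoundary G Z).ncard ≤ n - 1 := by
        calc (edgeBoundary G Z).ncard ≤ ((fun c => s(x, ℓ x c)) '' (Sᶜ : Set V2)).ncard :=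
              Set.ncard_le_ncard hbd_sub (Set.toFinite _)
          _ ≤ (Sᶜ : Set V2).ncard := Set.ncard_image_le (Set.toFinite _)
          _ ≤ n - 1 := by omega
      have hbd_disc : ¬(G.deleteEdges (edgeBoundary G Z)).Connected :=
        boundary_disconnects G Z (Set.mem_insert x X)
          (fun h => h.elim (fun h1 => hy0x h1) (fun h1 => hy0X h1))
      have : edgeConn G ≤ (edgeBoundary G Z).ncard :=
        edgeConn_le' G _ (fun e he => he.1) hbd_disc
      omega

end Dir2
/-- Corollary 3.4. For any `n`-regular connected graph `G`,
`λ(G ® K_n) = λ(G)`, where `K_n` is the complete graph on `n` vertices. -/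
theorem edgeConn_replacementProduct_complete
    {V1 V2 : Type*} [Fintype V1] [Fintype V2] {n : ℕ}
    (G : SimpleGraph V1) (ℓ : V1 → V2 → V1)
    (hℓ : IsRPLabelling G ℓ)
    (hconn : G.Connected)
    (hreg : ∀ x : V1, (G.neighborSet x).ncard = n)
    (hcard : Fintype.card V2 = n) :
    edgeConn (replacementProduct G (⊤ : SimpleGraph V2) ℓ) = edgeConn G := by
  classical
  by_cases hV1 : ∃ a b : V1, a ≠ b
  · obtain ⟨a0, b0, hab⟩ := hV1
    have hnb : (G.neighborSet a0).Nonempty := by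
      obtain ⟨p⟩ := hconn.preconnected a0 b0
      cases p with
      | nil => exact absurd rfl hab
      | cons h _ => exact ⟨_, h⟩
    have hn1 : 1 ≤ n := by
      have h1 := hreg a0
      have hpos := (Set.ncard_pos (Set.toFinite _)).2 hnb
      omega
    have hV2 : Nonempty V2 := Fintype.card_pos_iff.1 (by omega)
    obtain ⟨i0⟩ := hV2
    have hlabE : ∀ x y : V1, ∃ c : V2, G.Adj x y → ℓ x c = y := by
      intro x y
      by_cases hadj : G.Adj x y
      · have hfin : Nat.card ↥(G.neighborSet x) = Nat.card V2 := by
          rw [Nat.card_coe_set_eq, hreg, Nat.card_eq_fintype_card, hcard]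
        set g : V2 → ↥(G.neighborSet x) := fun c => ⟨ℓ x c, hℓ.2 x c⟩ with hg
        have hginj : Function.Injective g := by
          intro c d hcd
          exact hℓ.1 x (congrArg Subtype.val hcd)
        have hgbij : Function.Bijective g :=
          (Nat.bijective_iff_injective_and_card g).2 ⟨hginj, hfin.symm⟩
        obtain ⟨c, hc⟩ := hgbij.2 ⟨y, hadj⟩
        exact ⟨c, fun _ => congrArg Subtype.val hc⟩
      · exact ⟨i0, fun h => absurd h hadj⟩
    choose lab hlab using hlabE
    refine le_antisymm ?_ ?_
    · have hGne : {k | ∃ F : Set (Sym2 V1), F ⊆ G.edgeSet ∧ F.ncard = k ∧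
          ¬(G.deleteEdges F).Connected}.Nonempty := by
        refine ⟨(edgeBoundary G {a0}).ncard, edgeBoundary G {a0}, fun e he => he.1, rfl, ?_⟩
        exact boundary_disconnects G {a0} (Set.mem_singleton _) (by simpa using (Ne.symm hab))
      obtain ⟨F, hFsub, hFcard, hFdisc⟩ := Nat.sInf_mem hGne
      rw [show sInf _ = edgeConn G from rfl] at hFcard
      calc edgeConn (replacementProduct G (⊤ : SimpleGraph V2) ℓ) ≤ F.ncard :=
            dir1 G ℓ hℓ lab hlab i0 F hFsub hFdisc
        _ = edgeConn G := hFcard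
    · exact dir2 G ℓ hℓ lab hlab i0 hconn hreg hcard a0 b0 hab
  · push_neg at hV1
    obtain ⟨v1⟩ := hconn.nonempty
    have hn0 : n = 0 := by
      rw [← hreg v1]
      have he : G.neighborSet v1 = ∅ := by
        ext w
        simp only [SimpleGraph.mem_neighborSet, Set.mem_empty_iff_false, iff_false]
        intro h
        exact h.ne (hV1 v1 w)
      rw [he, Set.ncard_empty]
    have hV2e : IsEmpty V2 := Fintype.card_eq_zero_iff.1 (by omega)
    have hG0 : edgeConn G = 0 := by
      have hset : {k | ∃ F : Set (Sym2 V1), F ⊆ G.edgeSet ∧ F.ncard = k ∧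
          ¬(G.deleteEdges F).Connected} = ∅ := by
        ext k
        simp only [Set.mem_setOf_eq, Set.mem_empty_iff_false, iff_false]
        rintro ⟨F, -, -, hd⟩
        haveI : Nonempty V1 := ⟨v1⟩
        exact hd ⟨fun a b => (hV1 a b) ▸ SimpleGraph.Reachable.refl a⟩
      rw [edgeConn, hset, Nat.sInf_empty]
    have hP0 : edgeConn (replacementProduct G (⊤ : SimpleGraph V2) ℓ) = 0 := by
      have hmem : (0 : ℕ) ∈ {k | ∃ F : Set (Sym2 (V1 × V2)),
          F ⊆ (replacementProduct G (⊤ : SimpleGraph V2) ℓ).edgeSet ∧ F.ncard = k ∧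
          ¬((replacementProduct G (⊤ : SimpleGraph V2) ℓ).deleteEdges F).Connected} := by
        refine ⟨∅, Set.empty_subset _, Set.ncard_empty _, fun hc => ?_⟩
        obtain ⟨⟨p1, p2⟩⟩ := hc.nonempty
        exact hV2e.false p2
      exact Nat.le_zero.1 (Nat.sInf_le hmem)
    rw [hG0, hP0]
end

section
/- For any 2-connected n-regular graph G, λ(G®C_n) = min{λ(G), 3}, where C_n is the cycle on n vertices. -/
set_option linter.unusedSectionVars false

open SimpleGraph

section Aux

open Function Set

variable {V : Type*} [Fintype V]

lemma edgeConn_le {G : SimpleGraph V} {F : Set (Sym2 V)} (hF : F ⊆ G.edgeSet)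
    (h : ¬(G.deleteEdges F).Connected) : edgeConn G ≤ F.ncard :=
  Nat.sInf_le ⟨F, hF, rfl, h⟩

lemma connected_deleteEdges_of_lt {G : SimpleGraph V} {F : Set (Sym2 V)}
    (h : F.ncard < edgeConn G) : (G.deleteEdges F).Connected := by
  by_contra hc
  have h1 : G.deleteEdges (F ∩ G.edgeSet) = G.deleteEdges F := by
    ext a b
    simp only [SimpleGraph.deleteEdges_adj, Set.mem_inter_iff]
    refine ⟨fun ⟨ha, hb⟩ => ⟨ha, fun hf => hb ⟨hf, ha⟩⟩, fun ⟨ha, hb⟩ => ⟨ha, fun hf => hb hf.1⟩⟩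
  have h2 : edgeConn G ≤ (F ∩ G.edgeSet).ncard :=
    edgeConn_le Set.inter_subset_right (h1 ▸ hc)
  have h3 : (F ∩ G.edgeSet).ncard ≤ F.ncard :=
    Set.ncard_le_ncard Set.inter_subset_left (Set.toFinite F)
  omega

lemma not_connected_of_isolated {W : Type*} {H : SimpleGraph W} {v w : W} (hvw : v ≠ w)
    (h : ∀ u, ¬H.Adj v u) : ¬H.Connected := by
  intro hc
  obtain ⟨p⟩ := hc.preconnected v w
  cases p with
  | nil => exact hvw rfl
  | cons h' _ => exact h _ h'

lemma exists_adj_of_reachable {W : Type*} {H : SimpleGraph W} {v w : W}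
    (h : H.Reachable v w) (hne : v ≠ w) : ∃ u, H.Adj v u := by
  obtain ⟨p⟩ := h
  cases p with
  | nil => exact absurd rfl hne
  | cons h' _ => exact ⟨_, h'⟩

end Aux
section Cyc

open SimpleGraph
open Fin.CommRing

lemma cycle_edge_form {m : ℕ} {e : Sym2 (Fin (m + 3))} (he : e ∈ (cycleGraph (m + 3)).edgeSet) :
    ∃ a : Fin (m + 3), e = s(a, a + 1) := by
  induction e with
  | _ u v =>
    rw [SimpleGraph.mem_edgeSet] at he
    rcases (cycleGraph_adj).mp he with h | h
    · have h' : v + 1 = u := by rw [eq_add_of_sub_eq h]; ring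
      exact ⟨v, by rw [h']; exact Sym2.eq_swap⟩
    · have h' : u + 1 = v := by rw [eq_add_of_sub_eq h]; ring
      exact ⟨u, by rw [h']⟩

lemma cycle_deleteEdges_preconnected {m : ℕ} (D : Set (Sym2 (Fin (m + 3))))
    (hD : D.ncard ≤ 1) : ((cycleGraph (m + 3)).deleteEdges D).Preconnected := by
  obtain ⟨a, ha⟩ : ∃ a : Fin (m + 3), ∀ e ∈ D, e ∈ (cycleGraph (m+3)).edgeSet → e = s(a, a+1) := by
    by_cases h : ∃ e ∈ D, e ∈ (cycleGraph (m+3)).edgeSet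
    · obtain ⟨e, heD, hee⟩ := h
      obtain ⟨a, rfl⟩ := cycle_edge_form hee
      refine ⟨a, fun f hf _ => ?_⟩
      have : D = {s(a, a+1)} := by
        apply Set.eq_of_subset_of_ncard_le (by simpa using heD) ?_ (Set.toFinite _) |>.symm
        · simpa using hD
      rw [this] at hf; simpa using hf
    · push_neg at h
      exact ⟨0, fun e he hee => absurd hee (h e he)⟩
  have hmap : ∀ u v : Fin (m + 3), u.val + 1 = v.val →
      ((cycleGraph (m + 3)).deleteEdges D).Adj (a + 1 + u) (a + 1 + v) := by
    intro u v huv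
    have hub : u.val + 1 < m + 3 := by rw [huv]; exact v.isLt
    have hv : v = u + 1 := by
      apply Fin.ext
      rw [Fin.val_add]
      simp only [Fin.val_one]
      rw [Nat.mod_eq_of_lt hub]
      exact huv.symm
    rw [hv]
    rw [SimpleGraph.deleteEdges_adj]
    constructor
    · rw [cycleGraph_adj]
      right
      rw [← add_assoc, add_sub_cancel_left]
    · intro hmem
      have heq := ha _ hmem (by
        rw [SimpleGraph.mem_edgeSet, cycleGraph_adj]
        right
        rw [← add_assoc, add_sub_cancel_left])
      rw [Sym2.eq_iff] at heq
      rcases heq with ⟨h1, _⟩ | ⟨h1, h2⟩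
      · -- a + 1 + u = a  ⇒  u = -1, impossible since u.val + 1 < m + 3
        have hu : u = -1 := by linear_combination h1
        have := congrArg Fin.val hu
        rw [Fin.coe_neg_one] at this
        omega
      · -- a + 1 + u = a + 1 and a + 1 + (u + 1) = a : forces 2 ≡ 0 mod (m+3)
        have hu : u = 0 := by linear_combination h1
        rw [hu] at h2
        have h2z : (1 + 1 : Fin (m + 3)) = 0 := by linear_combination h2
        have hval := congrArg Fin.val h2z
        rw [Fin.val_add, Fin.val_one, Fin.val_zero, Nat.mod_eq_of_lt (by omega)] at hval
        omega
  refine SimpleGraph.Preconnected.map ⟨fun k => a + 1 + k, ?_⟩ ?_ (pathGraph_preconnected (m + 3))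
  · intro u v huv
    rcases (pathGraph_adj).mp huv with h | h
    · exact hmap u v h
    · exact (hmap v u h).symm
  · intro z
    refine ⟨z - (a + 1), ?_⟩
    show a + 1 + (z - (a + 1)) = z
    ring

end Cyc
section Product

open SimpleGraph Function

variable {V : Type*} [Fintype V] {n : ℕ}

lemma range_label (G : SimpleGraph V) (ℓ : V → Fin n → V) (hℓ : IsRPLabelling G ℓ)
    (hreg : ∀ x, (G.neighborSet x).ncard = n) {x y : V} (hxy : G.Adj x y) :
    ∃ i, ℓ x i = y := by
  have hsub : Set.range (ℓ x) ⊆ G.neighborSet x := by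
    rintro _ ⟨i, rfl⟩; exact hℓ.2 x i
  have hcard : n ≤ (Set.range (ℓ x)).ncard := by
    rw [← Set.image_univ, Set.ncard_image_of_injective _ (hℓ.1 x), Set.ncard_univ,
      Nat.card_eq_fintype_card, Fintype.card_fin]
  have heq := Set.eq_of_subset_of_ncard_le hsub (by rw [hreg x]; exact hcard) (Set.toFinite _)
  have hy : y ∈ Set.range (ℓ x) := by rw [heq]; exact hxy
  exact hy

lemma cloud_reach (G : SimpleGraph V) (ℓ : V → Fin n → V) (F : Set (Sym2 (V × Fin n))) (x : V)
    (hpre : ((cycleGraph n).deleteEdges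
      {e : Sym2 (Fin n) | Sym2.map (fun i => (x, i)) e ∈ F}).Preconnected) (i j : Fin n) :
    ((replacementProduct G (cycleGraph n) ℓ).deleteEdges F).Reachable (x, i) (x, j) := by
  refine SimpleGraph.Reachable.map ⟨fun k => (x, k), ?_⟩ (hpre i j)
  intro u v huv
  rw [SimpleGraph.deleteEdges_adj] at huv ⊢
  refine ⟨Or.inl ⟨rfl, huv.1⟩, ?_⟩
  have := huv.2
  simpa [Sym2.map_pair_eq] using this

lemma Dcard_le (F : Set (Sym2 (V × Fin n))) (x : V) :
    {e : Sym2 (Fin n) | Sym2.map (fun i => (x, i)) e ∈ F}.ncard ≤ F.ncard := by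
  apply Set.ncard_le_ncard_of_injOn (Sym2.map (fun i => (x, i)))
  · exact fun e he => he
  · intro e _ f _ hef
    exact Sym2.map.injective (fun a b h => by simpa using congrArg Prod.snd h) hef

lemma Dcard_le_sub (F : Set (Sym2 (V × Fin n))) (x : V) {f : Sym2 (V × Fin n)}
    (hfF : f ∈ F) (hf : ¬∃ i j : Fin n, f = s((x, i), (x, j))) :
    {e : Sym2 (Fin n) | Sym2.map (fun i => (x, i)) e ∈ F}.ncard ≤ F.ncard - 1 := by
  have h1 : {e : Sym2 (Fin n) | Sym2.map (fun i => (x, i)) e ∈ F}.ncard ≤ (F \ {f}).ncard := by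
    apply Set.ncard_le_ncard_of_injOn (Sym2.map (fun i => (x, i)))
    · intro e he
      refine ⟨he, fun hef => hf ?_⟩
      rw [Set.mem_singleton_iff] at hef
      induction e with
      | _ i j => exact ⟨i, j, by rw [← hef, Sym2.map_pair_eq]⟩
    · intro e _ g _ hef
      exact Sym2.map.injective (fun a b h => by simpa using congrArg Prod.snd h) hef
  rw [Set.ncard_diff_singleton_of_mem hfF] at h1
  exact h1

lemma lift_reach (G : SimpleGraph V) (ℓ : V → Fin n → V) (hℓ : IsRPLabelling G ℓ)
    (hreg : ∀ x, (G.neighborSet x).ncard = n) (F : Set (Sym2 (V × Fin n)))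
    (hcloud : ∀ (z : V) (i j : Fin n),
      ((replacementProduct G (cycleGraph n) ℓ).deleteEdges F).Reachable (z, i) (z, j))
    (H : SimpleGraph V)
    (hH : ∀ z z', H.Adj z z' → G.Adj z z' ∧
      ∀ a b, ℓ z a = z' → ℓ z' b = z → s((z, a), (z', b)) ∉ F)
    {u v : V} (huv : H.Reachable u v) (i j : Fin n) :
    ((replacementProduct G (cycleGraph n) ℓ).deleteEdges F).Reachable (u, i) (v, j) := by
  obtain ⟨p⟩ := huv
  induction p generalizing i with
  | nil => exact hcloud _ i j
  | @cons z z' _ h q ih =>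
    obtain ⟨hGzz, hnotF⟩ := hH _ _ h
    obtain ⟨a, ha⟩ := range_label G ℓ hℓ hreg hGzz
    obtain ⟨b, hb⟩ := range_label G ℓ hℓ hreg hGzz.symm
    refine (hcloud _ i a).trans (Reachable.trans ?_ (ih b))
    exact SimpleGraph.Adj.reachable
      (by rw [SimpleGraph.deleteEdges_adj]
          exact ⟨Or.inr ⟨hGzz, ha, hb⟩, hnotF a b ha hb⟩)

lemma lift_reachB (G : SimpleGraph V) (ℓ : V → Fin n → V) (hℓ : IsRPLabelling G ℓ)
    (hreg : ∀ x, (G.neighborSet x).ncard = n) (F : Set (Sym2 (V × Fin n))) (x : V)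
    (hcloud : ∀ z : V, z ≠ x → ∀ i j : Fin n,
      ((replacementProduct G (cycleGraph n) ℓ).deleteEdges F).Reachable (z, i) (z, j))
    (hmatch : ∀ z z' a b, G.Adj z z' → ℓ z a = z' → ℓ z' b = z → s((z, a), (z', b)) ∉ F)
    {u v : ({x}ᶜ : Set V)} (huv : (G.induce ({x}ᶜ : Set V)).Reachable u v) (i j : Fin n) :
    ((replacementProduct G (cycleGraph n) ℓ).deleteEdges F).Reachable ((u : V), i) ((v : V), j) := by
  obtain ⟨p⟩ := huv
  induction p generalizing i with
  | @nil w => exact hcloud _ (Set.mem_compl_singleton_iff.mp w.2) i j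
  | @cons z z' _ h q ih =>
    have hGzz : G.Adj (z : V) (z' : V) := h
    obtain ⟨a, ha⟩ := range_label G ℓ hℓ hreg hGzz
    obtain ⟨b, hb⟩ := range_label G ℓ hℓ hreg hGzz.symm
    refine (hcloud _ (Set.mem_compl_singleton_iff.mp z.2) i a).trans (Reachable.trans ?_ (ih b))
    exact SimpleGraph.Adj.reachable
      (by rw [SimpleGraph.deleteEdges_adj]
          exact ⟨Or.inr ⟨hGzz, ha, hb⟩, hmatch _ _ a b hGzz ha hb⟩)

end Product
section Structure

open SimpleGraph

variable {V : Type*} [Fintype V]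

lemma vertexConn_facts (G : SimpleGraph V) (h2 : 2 ≤ vertexConn G) :
    G.Connected ∧ ∀ x : V, (G.induce ({x}ᶜ : Set V)).Connected ∧ 2 ≤ ({x}ᶜ : Set V).ncard := by
  have hmem : ∀ k ∈ {k | ∃ S : Set V, S.ncard = k ∧
      (¬(G.induce (Sᶜ : Set V)).Connected ∨ (Sᶜ : Set V).ncard ≤ 1)}, 2 ≤ k :=
    fun k hk => le_trans h2 (Nat.sInf_le hk)
  have hGconn : G.Connected := by
    by_contra hc
    have h0 : (0 : ℕ) ∈ {k | ∃ S : Set V, S.ncard = k ∧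
        (¬(G.induce (Sᶜ : Set V)).Connected ∨ (Sᶜ : Set V).ncard ≤ 1)} := by
      refine ⟨∅, by simp, Or.inl ?_⟩
      rw [Set.compl_empty]
      rw [(induceUnivIso G).connected_iff]
      exact hc
    exact absurd (hmem 0 h0) (by omega)
  refine ⟨hGconn, fun x => ?_⟩
  by_contra hc
  have h1 : (1 : ℕ) ∈ {k | ∃ S : Set V, S.ncard = k ∧
      (¬(G.induce (Sᶜ : Set V)).Connected ∨ (Sᶜ : Set V).ncard ≤ 1)} := by
    refine ⟨{x}, Set.ncard_singleton x, ?_⟩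
    rcases not_and_or.mp hc with h | h
    · exact Or.inl h
    · exact Or.inr (by omega)
  exact absurd (hmem 1 h1) (by omega)

lemma two_le_n_of_reg {n : ℕ} (G : SimpleGraph V) (hreg : ∀ x, (G.neighborSet x).ncard = n)
    (h2 : 2 ≤ vertexConn G) : 2 ≤ n := by
  obtain ⟨hGconn, hx⟩ := vertexConn_facts G h2
  have hV : Nonempty V := hGconn.nonempty
  obtain ⟨x⟩ := hV
  obtain ⟨y, hy⟩ : ({x}ᶜ : Set V).Nonempty := by
    rcases Set.eq_empty_or_nonempty ({x}ᶜ : Set V) with h | h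
    · exfalso; have := (hx x).2; rw [h] at this; simp at this
    · exact h
  have hyx : y ≠ x := Set.mem_compl_singleton_iff.mp hy
  obtain ⟨w, hxw⟩ := exists_adj_of_reachable (hGconn.preconnected x y) (Ne.symm hyx)
  by_contra hn
  push_neg at hn
  interval_cases n
  · have h0 := hreg x
    rw [Set.ncard_eq_zero (Set.toFinite _)] at h0
    exact absurd (h0 ▸ hxw : w ∈ (∅ : Set V)) (Set.notMem_empty w)
  · have h1 := hreg x
    rw [Set.ncard_eq_one] at h1
    obtain ⟨a, ha⟩ := h1
    have hwa : w = a := by have : w ∈ G.neighborSet x := hxw; rw [ha] at this; exact this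
    -- G - w is connected with at least 2 vertices; x is in it, find a second neighbour of x
    obtain ⟨z, hz, hzx⟩ := Set.exists_ne_of_one_lt_ncard (s := ({w}ᶜ : Set V)) (by have := (hx w).2; omega) x
    have hxmem : x ∈ ({w}ᶜ : Set V) := Set.mem_compl_singleton_iff.mpr hxw.ne
    have hr := (hx w).1.preconnected ⟨x, hxmem⟩ ⟨z, hz⟩
    have hne : (⟨x, hxmem⟩ : ({w}ᶜ : Set V)) ≠ ⟨z, hz⟩ := by
      intro h; exact hzx (congrArg Subtype.val h).symm
    obtain ⟨w', hw'⟩ := exists_adj_of_reachable hr hne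
    have hGxw' : G.Adj x (w' : V) := hw'
    have : (w' : V) = a := by
      have : (w' : V) ∈ G.neighborSet x := hGxw'
      rw [ha] at this; exact this
    have hw'w : (w' : V) ≠ w := Set.mem_compl_singleton_iff.mp w'.2
    rw [this, ← hwa] at hw'w
    exact hw'w rfl

lemma star_cut (G : SimpleGraph V) {x y : V} (hxy : x ≠ y) :
    ((fun z => s(x, z)) '' G.neighborSet x) ⊆ G.edgeSet ∧
      ¬(G.deleteEdges ((fun z => s(x, z)) '' G.neighborSet x)).Connected := by
  constructor
  · rintro _ ⟨z, hz, rfl⟩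
    exact hz
  · refine not_connected_of_isolated hxy fun u hu => ?_
    rw [SimpleGraph.deleteEdges_adj] at hu
    exact hu.2 ⟨u, hu.1, rfl⟩

lemma edgeConn_set_nonempty (G : SimpleGraph V) {x y : V} (hxy : x ≠ y) :
    {k | ∃ F : Set (Sym2 V), F ⊆ G.edgeSet ∧ F.ncard = k ∧
      ¬(G.deleteEdges F).Connected}.Nonempty := by
  obtain ⟨h1, h2⟩ := star_cut G hxy
  exact ⟨_, _, h1, rfl, h2⟩

lemma edgeConn_le_degree {n : ℕ} (G : SimpleGraph V) (hreg : ∀ x, (G.neighborSet x).ncard = n)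
    {x y : V} (hxy : x ≠ y) : edgeConn G ≤ n := by
  obtain ⟨h1, h2⟩ := star_cut G (x := x) hxy
  calc edgeConn G ≤ _ := edgeConn_le h1 h2
    _ ≤ (G.neighborSet x).ncard := Set.ncard_image_le (Set.toFinite _)
    _ = n := hreg x

end Structure
section MainLower

open SimpleGraph

variable {V : Type*} [Fintype V] {n : ℕ}

lemma main_lower (G : SimpleGraph V) (ℓ : V → Fin n → V) (hℓ : IsRPLabelling G ℓ)
    (hreg : ∀ x, (G.neighborSet x).ncard = n) (h2conn : 2 ≤ vertexConn G)
    (F : Set (Sym2 (V × Fin n))) (hF : F.ncard < min (edgeConn G) 3) :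
    ((replacementProduct G (SimpleGraph.cycleGraph n) ℓ).deleteEdges F).Connected := by
  obtain ⟨hGconn, hx⟩ := vertexConn_facts G h2conn
  have hV : Nonempty V := hGconn.nonempty
  have hn2 : 2 ≤ n := two_le_n_of_reg G hreg h2conn
  have hF3 : F.ncard < 3 := lt_of_lt_of_le hF (min_le_right _ _)
  have hFlam : F.ncard < edgeConn G := lt_of_lt_of_le hF (min_le_left _ _)
  rw [connected_iff]
  refine ⟨?_, ⟨(Classical.arbitrary V, ⟨0, by omega⟩)⟩⟩
  by_cases hB : ∀ x : V, ((cycleGraph n).deleteEdges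
      {e : Sym2 (Fin n) | Sym2.map (fun i => (x, i)) e ∈ F}).Preconnected
  · -- Case A : every cloud is internally connected
    have hcloud : ∀ (z : V) (i j : Fin n),
        ((replacementProduct G (cycleGraph n) ℓ).deleteEdges F).Reachable (z, i) (z, j) :=
      fun z => cloud_reach G ℓ F z (hB z)
    have hFGcard : ({e ∈ Sym2.map Prod.fst '' F | ¬ e.IsDiag} : Set (Sym2 V)).ncard ≤ F.ncard :=
      le_trans (Set.ncard_le_ncard (Set.sep_subset _ _) (Set.toFinite _))
        (Set.ncard_image_le (Set.toFinite F))
    have hGFconn : (G.deleteEdges {e ∈ Sym2.map Prod.fst '' F | ¬ e.IsDiag}).Connected :=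
      connected_deleteEdges_of_lt (lt_of_le_of_lt hFGcard hFlam)
    rintro ⟨u, i⟩ ⟨v, j⟩
    refine lift_reach G ℓ hℓ hreg F hcloud
      (G.deleteEdges {e ∈ Sym2.map Prod.fst '' F | ¬ e.IsDiag}) ?_
      (hGFconn.preconnected u v) i j
    intro z z' hzz
    rw [SimpleGraph.deleteEdges_adj] at hzz
    refine ⟨hzz.1, fun a b ha hb hmem => hzz.2 ?_⟩
    refine ⟨⟨s((z, a), (z', b)), hmem, by rw [Sym2.map_pair_eq]⟩, ?_⟩
    rw [Sym2.isDiag_iff_proj_eq]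
    exact hzz.1.ne
  · -- Case B : some cloud x is internally disconnected; then F ⊆ internal edges of cloud x
    push_neg at hB
    obtain ⟨x, hxbad⟩ := hB
    have hint : ∀ f ∈ F, ∃ i j : Fin n, f = s((x, i), (x, j)) := by
      intro f hfF
      by_contra hnf
      apply hxbad
      rcases Nat.lt_or_ge n 3 with hn3 | hn3
      · -- n = 2 : here λ(G) ≤ 2 so |F| ≤ 1 and the cloud has no deleted internal edge
        obtain ⟨y, hy⟩ : ({x}ᶜ : Set V).Nonempty :=
          Set.nonempty_of_ncard_ne_zero (by have := (hx x).2; omega)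
        have hlam : edgeConn G ≤ n :=
          edgeConn_le_degree G hreg (Ne.symm (Set.mem_compl_singleton_iff.mp hy))
        have hD0 : {e : Sym2 (Fin n) | Sym2.map (fun i => (x, i)) e ∈ F}.ncard = 0 := by
          have := Dcard_le_sub F x hfF hnf
          omega
        rw [Set.ncard_eq_zero (Set.toFinite _)] at hD0
        rw [hD0, SimpleGraph.deleteEdges_empty]
        exact cycleGraph_preconnected
      · obtain ⟨m, rfl⟩ : ∃ m, n = m + 3 := ⟨n - 3, by omega⟩
        apply cycle_deleteEdges_preconnected
        have := Dcard_le_sub F x hfF hnf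
        omega
    have hmatch : ∀ z z' a b, G.Adj z z' → ℓ z a = z' → ℓ z' b = z →
        s((z, a), (z', b)) ∉ F := by
      intro z z' a b hzz _ _ hmem
      obtain ⟨i, j, hij⟩ := hint _ hmem
      rw [Sym2.eq_iff] at hij
      rcases hij with ⟨h1, h2⟩ | ⟨h1, h2⟩ <;>
        exact hzz.ne (by rw [show z = x from congrArg Prod.fst h1,
          show z' = x from congrArg Prod.fst h2])
    have hcloudB : ∀ z : V, z ≠ x → ∀ i j : Fin n,
        ((replacementProduct G (cycleGraph n) ℓ).deleteEdges F).Reachable (z, i) (z, j) := by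
      intro z hz i j
      apply cloud_reach G ℓ F z
      have hD0 : {e : Sym2 (Fin n) | Sym2.map (fun i => (z, i)) e ∈ F} = ∅ := by
        ext e
        simp only [Set.mem_setOf_eq, Set.mem_empty_iff_false, iff_false]
        intro hmem
        induction e with
        | _ a b =>
          rw [Sym2.map_pair_eq] at hmem
          obtain ⟨i', j', hij⟩ := hint _ hmem
          rw [Sym2.eq_iff] at hij
          rcases hij with ⟨h1, _⟩ | ⟨h1, _⟩ <;> exact hz (show z = x from congrArg Prod.fst h1)
      rw [hD0, SimpleGraph.deleteEdges_empty]
      exact cycleGraph_preconnected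
    -- every vertex can reach some vertex whose cloud is not x
    have hstep : ∀ (u : V) (i : Fin n), ∃ (w : V) (b : Fin n), w ≠ x ∧
        ((replacementProduct G (cycleGraph n) ℓ).deleteEdges F).Reachable (u, i) (w, b) := by
      intro u i
      by_cases hu : u = x
      · subst hu
        have hadj : G.Adj u (ℓ u i) := hℓ.2 u i
        obtain ⟨b, hb⟩ := range_label G ℓ hℓ hreg hadj.symm
        refine ⟨ℓ u i, b, hadj.ne', SimpleGraph.Adj.reachable ?_⟩
        rw [SimpleGraph.deleteEdges_adj]
        exact ⟨Or.inr ⟨hadj, rfl, hb⟩, hmatch _ _ _ _ hadj rfl hb⟩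
      · exact ⟨u, i, hu, SimpleGraph.Reachable.refl _⟩
    rintro ⟨u, i⟩ ⟨v, j⟩
    obtain ⟨w, b, hw, hr1⟩ := hstep u i
    obtain ⟨w', b', hw', hr2⟩ := hstep v j
    refine hr1.trans (SimpleGraph.Reachable.trans ?_ hr2.symm)
    exact lift_reachB G ℓ hℓ hreg F x hcloudB hmatch
      ((hx x).1.preconnected ⟨w, Set.mem_compl_singleton_iff.mpr hw⟩
        ⟨w', Set.mem_compl_singleton_iff.mpr hw'⟩) b b'

end MainLower
section Upper

open SimpleGraph Function

variable {V : Type*} [Fintype V] {n : ℕ}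

lemma upper_le_edgeConn (G : SimpleGraph V) (ℓ : V → Fin n → V) (hℓ : IsRPLabelling G ℓ)
    (hreg : ∀ x, (G.neighborSet x).ncard = n) (h2conn : 2 ≤ vertexConn G) :
    edgeConn (replacementProduct G (SimpleGraph.cycleGraph n) ℓ) ≤ edgeConn G := by
  obtain ⟨hGconn, hx⟩ := vertexConn_facts G h2conn
  have hV : Nonempty V := hGconn.nonempty
  have hn2 : 2 ≤ n := two_le_n_of_reg G hreg h2conn
  haveI : Nonempty (Fin n) := ⟨⟨0, by omega⟩⟩
  obtain ⟨x₀⟩ := hV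
  obtain ⟨y₀, hy₀⟩ : ({x₀}ᶜ : Set V).Nonempty :=
    Set.nonempty_of_ncard_ne_zero (by have := (hx x₀).2; omega)
  have hxy₀ : x₀ ≠ y₀ := fun h => (Set.mem_compl_singleton_iff.mp hy₀) h.symm
  obtain ⟨FG, hsub, hcard, hdisc⟩ := Nat.sInf_mem (edgeConn_set_nonempty G hxy₀)
  -- lift the minimum cut of G to the replacement product
  set L : Sym2 V → Sym2 (V × Fin n) := Sym2.lift
    ⟨fun x y => s((x, Function.invFun (ℓ x) y), (y, Function.invFun (ℓ y) x)),
      fun a b => Sym2.eq_swap⟩ with hL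
  have hLmk : ∀ x y : V, L s(x, y) =
      s((x, Function.invFun (ℓ x) y), (y, Function.invFun (ℓ y) x)) := fun x y => rfl
  have hinv : ∀ {x y : V}, G.Adj x y → ℓ x (Function.invFun (ℓ x) y) = y := by
    intro x y hxy
    exact Function.invFun_eq (range_label G ℓ hℓ hreg hxy)
  have hsub' : L '' FG ⊆ (replacementProduct G (SimpleGraph.cycleGraph n) ℓ).edgeSet := by
    rintro _ ⟨e, he, rfl⟩
    induction e with
    | _ x y =>
      have hadj : G.Adj x y := hsub he
      rw [hLmk, SimpleGraph.mem_edgeSet]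
      exact Or.inr ⟨hadj, hinv hadj, hinv hadj.symm⟩
  have hproj : ∀ p q : V × Fin n,
      ((replacementProduct G (SimpleGraph.cycleGraph n) ℓ).deleteEdges (L '' FG)).Reachable p q →
      (G.deleteEdges FG).Reachable p.1 q.1 := by
    intro p q h
    obtain ⟨w⟩ := h
    induction w with
    | nil => exact SimpleGraph.Reachable.refl _
    | @cons p r q h _ ih =>
      rw [SimpleGraph.deleteEdges_adj] at h
      rcases h.1 with ⟨heq, _⟩ | ⟨hadj, ha, hb⟩
      · exact heq ▸ ih
      · refine (SimpleGraph.Adj.reachable ?_).trans ih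
        rw [SimpleGraph.deleteEdges_adj]
        refine ⟨hadj, fun hmem => h.2 ?_⟩
        have hLpq : L s(p.1, r.1) = s(p, r) := by
          rw [hLmk]
          have h1 : Function.invFun (ℓ p.1) r.1 = p.2 := by
            rw [← ha]; exact Function.leftInverse_invFun (hℓ.1 p.1) p.2
          have h2 : Function.invFun (ℓ r.1) p.1 = r.2 := by
            rw [← hb]; exact Function.leftInverse_invFun (hℓ.1 r.1) r.2
          rw [h1, h2]
        exact ⟨s(p.1, r.1), hmem, hLpq⟩
  have hdisc' : ¬((replacementProduct G (SimpleGraph.cycleGraph n) ℓ).deleteEdges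
      (L '' FG)).Connected := by
    intro hc
    rw [SimpleGraph.connected_iff] at hdisc
    push_neg at hdisc
    obtain ⟨u, v, huv⟩ : ∃ u v : V, ¬(G.deleteEdges FG).Reachable u v := by
      by_contra hp
      push_neg at hp
      exact (hdisc (fun u v => hp u v)).false x₀
    exact huv (hproj (u, Classical.arbitrary (Fin n)) (v, Classical.arbitrary (Fin n))
      (hc.preconnected _ _))
  calc edgeConn (replacementProduct G (SimpleGraph.cycleGraph n) ℓ)
      ≤ (L '' FG).ncard := edgeConn_le hsub' hdisc'
    _ ≤ FG.ncard := Set.ncard_image_le (Set.toFinite _)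
    _ = edgeConn G := hcard

open Fin.CommRing in
lemma upper_le_three (G : SimpleGraph V) (ℓ : V → Fin n → V) (hℓ : IsRPLabelling G ℓ)
    (hreg : ∀ x, (G.neighborSet x).ncard = n) (h2conn : 2 ≤ vertexConn G) (hn3 : 3 ≤ n) :
    edgeConn (replacementProduct G (SimpleGraph.cycleGraph n) ℓ) ≤ 3 := by
  obtain ⟨hGconn, hx⟩ := vertexConn_facts G h2conn
  have hV : Nonempty V := hGconn.nonempty
  obtain ⟨m, rfl⟩ : ∃ m, n = m + 3 := ⟨n - 3, by omega⟩
  obtain ⟨x⟩ := hV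
  have hadj : G.Adj x (ℓ x 0) := hℓ.2 x 0
  obtain ⟨b, hb⟩ := range_label G ℓ hℓ hreg hadj.symm
  set F3 : Set (Sym2 (V × Fin (m + 3))) :=
    {s((x, 0), (x, 1)), s((x, 0), (x, -1)), s((x, 0), (ℓ x 0, b))} with hF3
  have hsub : F3 ⊆ (replacementProduct G (SimpleGraph.cycleGraph (m + 3)) ℓ).edgeSet := by
    intro e he
    rcases he with h | h | h
    · subst h
      rw [SimpleGraph.mem_edgeSet]
      refine Or.inl ⟨rfl, ?_⟩
      rw [cycleGraph_adj]
      right; rw [sub_zero]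
    · subst h
      rw [SimpleGraph.mem_edgeSet]
      refine Or.inl ⟨rfl, ?_⟩
      rw [cycleGraph_adj]
      left; rw [zero_sub, neg_neg]
    · rw [Set.mem_singleton_iff] at h
      subst h
      rw [SimpleGraph.mem_edgeSet]
      exact Or.inr ⟨hadj, rfl, hb⟩
  have h01 : ((0 : Fin (m + 3))) ≠ 1 := by
    intro h
    have := congrArg Fin.val h
    rw [Fin.val_zero, Fin.val_one] at this
    omega
  have hdisc : ¬((replacementProduct G (SimpleGraph.cycleGraph (m + 3)) ℓ).deleteEdges
      F3).Connected := by
    refine not_connected_of_isolated (v := (x, (0 : Fin (m + 3)))) (w := (x, 1))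
      (fun h => h01 (congrArg Prod.snd h)) ?_
    rintro ⟨z, c⟩ hu
    rw [SimpleGraph.deleteEdges_adj] at hu
    obtain ⟨h1, h2⟩ := hu
    apply h2
    rcases h1 with ⟨heq, hcyc⟩ | ⟨hGxz, hl1, hl2⟩
    · obtain rfl : x = z := heq
      rw [cycleGraph_adj] at hcyc
      rcases hcyc with hc | hc
      · have : c = -1 := by linear_combination -hc
        rw [this]
        exact Or.inr (Or.inl rfl)
      · have : c = 1 := by linear_combination hc
        rw [this]
        exact Or.inl rfl
    · obtain rfl : ℓ x 0 = z := hl1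
      have : c = b := hℓ.1 _ (hl2.trans hb.symm)
      rw [this]
      exact Or.inr (Or.inr rfl)
  have hcard : F3.ncard ≤ 3 := by
    calc F3.ncard ≤ _ + 1 := Set.ncard_insert_le _ _
      _ ≤ (_ + 1) + 1 := by gcongr; exact Set.ncard_insert_le _ _
      _ ≤ 3 := by rw [Set.ncard_singleton]
  exact le_trans (edgeConn_le hsub hdisc) hcard

end Upper
/-- Corollary 3.5. For any 2-connected `n`-regular graph `G`,
`λ(G ® C_n) = min {λ(G), 3}`, where `C_n` is the cycle on `n` vertices. -/
theorem edgeConn_replacementProduct_cycle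
    {V : Type*} [Fintype V] {n : ℕ}
    (G : SimpleGraph V) (ℓ : V → Fin n → V)
    (hℓ : IsRPLabelling G ℓ)
    (h2conn : 2 ≤ vertexConn G)
    (hreg : ∀ x : V, (G.neighborSet x).ncard = n) :
    edgeConn (replacementProduct G (SimpleGraph.cycleGraph n) ℓ) = min (edgeConn G) 3 := by
  obtain ⟨hGconn, hx⟩ := vertexConn_facts G h2conn
  have hV : Nonempty V := hGconn.nonempty
  have hn2 : 2 ≤ n := two_le_n_of_reg G hreg h2conn
  obtain ⟨x₀⟩ := hV
  apply le_antisymm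
  · refine le_min (upper_le_edgeConn G ℓ hℓ hreg h2conn) ?_
    rcases Nat.lt_or_ge n 3 with h | h
    · obtain ⟨y₀, hy₀⟩ : ({x₀}ᶜ : Set V).Nonempty :=
        Set.nonempty_of_ncard_ne_zero (by have := (hx x₀).2; omega)
      have hxy : x₀ ≠ y₀ := fun hh => (Set.mem_compl_singleton_iff.mp hy₀) hh.symm
      have h1 := edgeConn_le_degree G hreg hxy
      have h2 := upper_le_edgeConn G ℓ hℓ hreg h2conn
      omega
    · exact upper_le_three G ℓ hℓ hreg h2conn h
  · have hne2 : ((x₀, (⟨0, by omega⟩ : Fin n)) : V × Fin n) ≠ (x₀, ⟨1, by omega⟩) := by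
      intro h
      have := congrArg (fun p : V × Fin n => (Prod.snd p).val) h
      simp at this
    refine le_csInf (edgeConn_set_nonempty _ hne2) ?_
    rintro k ⟨F, hFsub, rfl, hdisc⟩
    by_contra hlt
    push_neg at hlt
    exact hdisc (main_lower G ℓ hℓ hreg h2conn F hlt)
end

section
/- Let G1 be a connected δ1-regular graph on n vertices and G2 be a connected δ2-regular graph on δ1 vertices, and write λ1 = λ(G1). Then λ'(G1®G2) ≤ min{λ1, 2δ2}. -/
open SimpleGraph

/-- Auxiliary: a set closed under adjacency absorbs walks. -/
private lemma walk_closed {V : Type*} {G : SimpleGraph V} {S : Set V}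
    (hS : ∀ p ∈ S, ∀ q, G.Adj p q → q ∈ S) :
    ∀ {p q : V}, G.Walk p q → p ∈ S → q ∈ S := by
  intro p q w
  induction w with
  | nil => exact id
  | cons h _ ih => intro hp; exact ih (hS _ hp _ h)

/-- Auxiliary: projecting walks along a map that sends edges to edges or collapses them. -/
private lemma walk_proj {V W : Type*} {G : SimpleGraph V} {H : SimpleGraph W} (f : V → W)
    (hf : ∀ p q : V, G.Adj p q → f p = f q ∨ H.Adj (f p) (f q)) :
    ∀ {p q : V}, G.Walk p q → H.Reachable (f p) (f q) := by
  intro p q w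
  induction w with
  | nil => exact Reachable.refl _
  | cons h _ ih =>
    rcases hf _ _ h with he | ha
    · rwa [he]
    · exact ha.reachable.trans ih

/-- Theorem 4.1. If `G1` is a connected `δ1`-regular graph on `n`
vertices and `G2` is a connected `δ2`-regular graph on `δ1` vertices, then
`λ'(G1 ® G2) ≤ min {λ1, 2·δ2}`. -/
theorem restrictedEdgeConn_replacementProduct_upper_bound
    {V1 V2 : Type*} [Fintype V1] [Fintype V2] {n δ1 δ2 : ℕ}
    (G1 : SimpleGraph V1) (G2 : SimpleGraph V2) (ℓ : V1 → V2 → V1)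
    (hℓ : IsRPLabelling G1 ℓ)
    (hc1 : G1.Connected) (hc2 : G2.Connected)
    (hr1 : ∀ x : V1, (G1.neighborSet x).ncard = δ1)
    (hr2 : ∀ i : V2, (G2.neighborSet i).ncard = δ2)
    (hn : Fintype.card V1 = n) (hd : Fintype.card V2 = δ1) :
    restrictedEdgeConn (replacementProduct G1 G2 ℓ) ≤ min (edgeConn G1) (2 * δ2) := by
  classical
  obtain ⟨hinj, hadj⟩ := hℓ
  haveI hne1 : Nonempty V1 := hc1.nonempty
  haveI hne2 : Nonempty V2 := hc2.nonempty
  -- the range of `ℓ x` is exactly the neighbourhood of `x`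
  have hrange : ∀ x, Set.range (ℓ x) = G1.neighborSet x := by
    intro x
    refine Set.eq_of_subset_of_ncard_le ?_ ?_ (Set.toFinite _)
    · rintro y ⟨i, rfl⟩; exact hadj x i
    · rw [hr1 x, ← hd, ← Set.image_univ, Set.ncard_image_of_injOn
        (Set.injOn_of_injective (hinj x)), Set.ncard_univ, Nat.card_eq_fintype_card]
  set Gp := replacementProduct G1 G2 ℓ with hGpdef
  set inv : V1 → V1 → V2 := fun x => Function.invFun (ℓ x) with hinvdef
  have hinv1 : ∀ x y, G1.Adj x y → ℓ x (inv x y) = y := by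
    intro x y h
    have : y ∈ Set.range (ℓ x) := by rw [hrange x]; exact h
    exact Function.invFun_eq this
  have hinv2 : ∀ x i, inv x (ℓ x i) = i := fun x i => Function.leftInverse_invFun (hinj x) i
  -- every vertex of the product has its "matching" neighbour in the other cloud
  have hmatch : ∀ (z : V1) (k : V2), Gp.Adj (z, k) (ℓ z k, inv (ℓ z k) z) :=
    fun z k => Or.inr ⟨hadj z k, rfl, hinv1 _ _ (hadj z k).symm⟩
  -- matching-type edges, spelled out
  have hmt : ∀ u v : V1 × V2, Gp.Adj u v → u.1 ≠ v.1 →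
      G1.Adj u.1 v.1 ∧ ℓ u.1 u.2 = v.1 ∧ ℓ v.1 v.2 = u.1 := by
    rintro u v (⟨h, _⟩ | h) hne
    · exact absurd h hne
    · exact h
  rcases Nat.eq_zero_or_pos δ2 with h0 | hpos
  · -- degenerate case `δ2 = 0`: `G2` is a single vertex, the product is a single edge,
    -- and there is no restricted edge-cut at all
    subst h0
    have hG2e : ∀ i j : V2, ¬ G2.Adj i j := by
      intro i j h
      have h1 : 0 < (G2.neighborSet i).ncard :=
        (Set.ncard_pos (Set.toFinite _)).mpr ⟨j, h⟩
      rw [hr2 i] at h1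
      exact h1.false
    haveI hV2sub : Subsingleton V2 := by
      constructor
      intro i j
      obtain ⟨w⟩ := hc2.preconnected i j
      exact (walk_closed (S := {i}) (by
        rintro p rfl q hq
        exact absurd hq (hG2e _ _)) w rfl).symm
    -- adjacency in the product is a matching
    have huniq : ∀ u a : V1 × V2, Gp.Adj u a → a = (ℓ u.1 u.2, u.2) := by
      rintro u a (⟨_, h⟩ | ⟨_, h2, _⟩)
      · exact absurd h (hG2e _ _)
      · exact Prod.ext h2.symm (Subsingleton.elim _ _)
    -- the product is connected
    have hGpconn : Gp.Connected := by
      rw [connected_iff]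
      refine ⟨?_, inferInstance⟩
      intro p q
      obtain ⟨w⟩ := hc1.preconnected p.1 q.1
      have key : Gp.Reachable (p.1, p.2) (q.1, p.2) := by
        refine walk_proj (G := G1) (fun x => (x, p.2)) ?_ w
        intro a b h
        right
        refine Or.inr ⟨h, ?_, ?_⟩
        · obtain ⟨k, hk⟩ : b ∈ Set.range (ℓ a) := by rw [hrange a]; exact h
          rwa [Subsingleton.elim p.2 k]
        · obtain ⟨k, hk⟩ : a ∈ Set.range (ℓ b) := by rw [hrange b]; exact h.symm
          rwa [Subsingleton.elim p.2 k]
      have hq : (q.1, p.2) = q := Prod.ext rfl (Subsingleton.elim _ _)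
      rw [hq] at key
      exact key
    -- there is no restricted edge-cut, hence the `sInf` is `0`
    have hempty : {k | ∃ F : Set (Sym2 (V1 × V2)), IsRestrictedEdgeCut Gp F ∧ F.ncard = k}
        = ∅ := by
      ext k
      simp only [Set.mem_setOf_eq, Set.mem_empty_iff_false, iff_false, not_exists]
      rintro F ⟨⟨hFsub, hFdis, hFiso⟩, -⟩
      have hF : F = ∅ := by
        by_contra hne
        obtain ⟨e, he⟩ := Set.nonempty_iff_ne_empty.mpr hne
        have heE := hFsub he
        induction e using Sym2.ind with
        | _ u v =>
        rw [SimpleGraph.mem_edgeSet] at heE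
        obtain ⟨w, hw⟩ := hFiso u
        rw [SimpleGraph.deleteEdges_adj] at hw
        have h1 : w = (ℓ u.1 u.2, u.2) := huniq u w hw.1
        have h2 : v = (ℓ u.1 u.2, u.2) := huniq u v heE
        rw [h1, ← h2] at hw
        exact hw.2 he
      rw [hF, SimpleGraph.deleteEdges_empty] at hFdis
      exact hFdis hGpconn
    rw [restrictedEdgeConn, hempty, Nat.sInf_empty]
    exact Nat.zero_le _
  · -- main case: `δ2 ≥ 1`
    -- every cloud has a local neighbour
    have hcloud : ∀ k : V2, ∃ k', G2.Adj k k' := by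
      intro k
      have : (G2.neighborSet k).Nonempty :=
        Set.nonempty_of_ncard_ne_zero (by rw [hr2 k]; omega)
      exact this
    refine le_min ?_ ?_
    · -- `λ'(Gp) ≤ λ(G1)`
      have hnontriv : ∃ x y : V1, x ≠ y := by
        obtain ⟨i⟩ := hne2
        obtain ⟨x⟩ := hne1
        exact ⟨x, ℓ x i, (hadj x i).ne⟩
      have hSne : {k | ∃ F : Set (Sym2 V1), F ⊆ G1.edgeSet ∧ F.ncard = k ∧
          ¬(G1.deleteEdges F).Connected}.Nonempty := by
        refine ⟨(G1.edgeSet).ncard, G1.edgeSet, le_refl _, rfl, ?_⟩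
        intro hcon
        obtain ⟨x, y, hxy⟩ := hnontriv
        obtain ⟨w⟩ := hcon.preconnected x y
        have := walk_closed (S := {x}) (by
          rintro p rfl q hq
          rw [SimpleGraph.deleteEdges_adj] at hq
          exact absurd hq.1 hq.2) w rfl
        exact hxy this.symm
      have hmem : edgeConn G1 ∈ {k | ∃ F : Set (Sym2 V1), F ⊆ G1.edgeSet ∧ F.ncard = k ∧
          ¬(G1.deleteEdges F).Connected} := Nat.sInf_mem hSne
      obtain ⟨F1, hF1sub, hF1card, hF1dis⟩ := hmem
      -- lift `F1` to the set of matching edges over it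
      set F : Set (Sym2 (V1 × V2)) := {e | ∃ u v : V1 × V2, Gp.Adj u v ∧ u.1 ≠ v.1 ∧
        s(u.1, v.1) ∈ F1 ∧ e = s(u, v)} with hFdef
      have hFsub : F ⊆ Gp.edgeSet := by
        rintro e ⟨u, v, huv, -, -, rfl⟩
        exact huv
      have hFdis : ¬(Gp.deleteEdges F).Connected := by
        intro hcon
        have hnp : ¬(G1.deleteEdges F1).Preconnected :=
          fun h => hF1dis ((connected_iff _).mpr ⟨h, hne1⟩)
        simp only [SimpleGraph.Preconnected, not_forall] at hnp
        obtain ⟨x0, y0, hnreach⟩ := hnp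
        obtain ⟨ι⟩ := hne2
        obtain ⟨w⟩ := hcon.preconnected (x0, ι) (y0, ι)
        refine hnreach ?_
        refine walk_proj (f := Prod.fst) ?_ w
        intro p q hpq
        rw [SimpleGraph.deleteEdges_adj] at hpq
        by_cases hfst : p.1 = q.1
        · exact Or.inl hfst
        · obtain ⟨h1, h2, h3⟩ := hmt p q hpq.1 hfst
          refine Or.inr (SimpleGraph.deleteEdges_adj.mpr ⟨h1, ?_⟩)
          intro hmemF1
          exact hpq.2 ⟨p, q, hpq.1, hfst, hmemF1, rfl⟩
      have hFiso : ∀ v : V1 × V2, ∃ w, (Gp.deleteEdges F).Adj v w := by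
        rintro ⟨z, k⟩
        obtain ⟨k', hk'⟩ := hcloud k
        refine ⟨(z, k'), SimpleGraph.deleteEdges_adj.mpr ⟨Or.inl ⟨rfl, hk'⟩, ?_⟩⟩
        rintro ⟨u, v, -, hne, -, heq⟩
        rw [Sym2.eq_iff] at heq
        rcases heq with ⟨hu, hv⟩ | ⟨hu, hv⟩ <;>
          · apply hne
            rw [← hu, ← hv]
      -- `F` has the same cardinality as `F1`
      have himg : Sym2.map Prod.fst '' F = F1 := by
        apply Set.Subset.antisymm
        · rintro a ⟨e, ⟨u, v, -, -, hmemF1, rfl⟩, rfl⟩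
          rwa [Sym2.map_pair_eq]
        · intro a ha
          have haE := hF1sub ha
          induction a using Sym2.ind with
          | _ x y =>
          rw [SimpleGraph.mem_edgeSet] at haE
          refine ⟨s(((x, inv x y) : V1 × V2), ((y, inv y x) : V1 × V2)),
            ⟨(x, inv x y), (y, inv y x),
              Or.inr ⟨haE, hinv1 x y haE, hinv1 y x haE.symm⟩, haE.ne, ha, rfl⟩, ?_⟩
          rw [Sym2.map_pair_eq]
      have hinjOn : Set.InjOn (Sym2.map Prod.fst) F := by
        rintro e ⟨u, v, huv, hne, -, rfl⟩ e' ⟨u', v', huv', hne', -, rfl⟩ heq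
        rw [Sym2.map_pair_eq, Sym2.map_pair_eq, Sym2.eq_iff] at heq
        obtain ⟨-, hu2, hv2⟩ := hmt u v huv hne
        obtain ⟨-, hu2', hv2'⟩ := hmt u' v' huv' hne'
        have hu : u.2 = inv u.1 v.1 := by rw [← hu2, hinv2]
        have hv : v.2 = inv v.1 u.1 := by rw [← hv2, hinv2]
        have hu' : u'.2 = inv u'.1 v'.1 := by rw [← hu2', hinv2]
        have hv' : v'.2 = inv v'.1 u'.1 := by rw [← hv2', hinv2]
        rcases heq with ⟨h1, h2⟩ | ⟨h1, h2⟩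
        · have e1 : u = u' := Prod.ext h1 (by rw [hu, hu', h1, h2])
          have e2 : v = v' := Prod.ext h2 (by rw [hv, hv', h1, h2])
          rw [e1, e2]
        · have e1 : u = v' := Prod.ext h1 (by rw [hu, hv', h1, h2])
          have e2 : v = u' := Prod.ext h2 (by rw [hv, hu', h1, h2])
          rw [e1, e2, Sym2.eq_swap]
      have hcard : F.ncard = edgeConn G1 := by
        rw [← hF1card, ← himg, Set.ncard_image_of_injOn hinjOn]
      exact Nat.sInf_le ⟨F, ⟨hFsub, hFdis, hFiso⟩, hcard⟩
    · -- `λ'(Gp) ≤ 2 * δ2`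
      obtain ⟨x⟩ := hne1
      obtain ⟨i⟩ := hne2
      set y : V1 := ℓ x i with hy
      set j : V2 := inv y x with hj
      have hxy : G1.Adj x y := hadj x i
      have hji : ℓ y j = x := hinv1 y x hxy.symm
      set F : Set (Sym2 (V1 × V2)) :=
        (fun i' => s(((x, i) : V1 × V2), ((x, i') : V1 × V2))) '' (G2.neighborSet i) ∪
        (fun j' => s(((y, j) : V1 × V2), ((y, j') : V1 × V2))) '' (G2.neighborSet j) with hFdef
      -- every edge in `F` joins vertices in the same cloud
      have hFsame : ∀ u v : V1 × V2, s(u, v) ∈ F → u.1 = v.1 := by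
        rintro u v (⟨a, -, heq⟩ | ⟨a, -, heq⟩) <;>
          · rw [Sym2.eq_iff] at heq
            rcases heq with ⟨h1, h2⟩ | ⟨h1, h2⟩ <;> rw [← h1, ← h2]
      have hFsub : F ⊆ Gp.edgeSet := by
        rintro e (⟨a, ha, rfl⟩ | ⟨a, ha, rfl⟩) <;> exact Or.inl ⟨rfl, ha⟩
      have hFiso : ∀ v : V1 × V2, ∃ w, (Gp.deleteEdges F).Adj v w := by
        rintro ⟨z, k⟩
        refine ⟨(ℓ z k, inv (ℓ z k) z), SimpleGraph.deleteEdges_adj.mpr ⟨hmatch z k, ?_⟩⟩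
        intro hmemF
        exact (hadj z k).ne (hFsame _ _ hmemF)
      have hFdis : ¬(Gp.deleteEdges F).Connected := by
        intro hcon
        set S : Set (V1 × V2) := {(x, i), (y, j)} with hSdef
        have hstep : ∀ p ∈ S, ∀ q, (Gp.deleteEdges F).Adj p q → q ∈ S := by
          intro p hp q hq
          rw [SimpleGraph.deleteEdges_adj] at hq
          rcases hp with rfl | hp
          · rcases hq.1 with ⟨h1, h2⟩ | ⟨h1, h2, h3⟩
            · exfalso
              apply hq.2
              refine Or.inl ⟨q.2, h2, ?_⟩
              have : q = (x, q.2) := Prod.ext h1.symm rfl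
              rw [this]
            · have hq1 : q.1 = y := h2.symm
              have hq2 : q.2 = j := by
                apply hinj y
                have h3' : ℓ y q.2 = x := by rw [← hq1]; exact h3
                rw [h3', hji]
              right
              rw [Set.mem_singleton_iff]
              exact Prod.ext hq1 hq2
          · rw [Set.mem_singleton_iff] at hp
            subst hp
            rcases hq.1 with ⟨h1, h2⟩ | ⟨h1, h2, h3⟩
            · exfalso
              apply hq.2
              refine Or.inr ⟨q.2, h2, ?_⟩
              have : q = (y, q.2) := Prod.ext h1.symm rfl
              rw [this]
            · have hq1 : q.1 = x := by
                have h2' : ℓ y j = q.1 := h2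
                rw [← h2', hji]
              have hq2 : q.2 = i := by
                apply hinj x
                have h3' : ℓ x q.2 = y := by rw [← hq1]; exact h3
                rw [h3', hy]
              left
              exact Prod.ext hq1 hq2
        obtain ⟨i', hi'⟩ := hcloud i
        obtain ⟨w⟩ := hcon.preconnected (x, i) (x, i')
        have hmem : ((x, i') : V1 × V2) ∈ S := walk_closed hstep w (Or.inl rfl)
        rcases hmem with h | h
        · rw [Prod.mk.injEq] at h
          exact hi'.ne' h.2
        · rw [Set.mem_singleton_iff, Prod.mk.injEq] at h
          exact hxy.ne h.1
      have hcard : F.ncard = 2 * δ2 := by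
        have hinj1 : Set.InjOn (fun i' => s(((x, i) : V1 × V2), ((x, i') : V1 × V2)))
            (G2.neighborSet i) := by
          intro a ha b hb h
          simp only [Sym2.eq_iff, Prod.mk.injEq] at h
          rcases h with ⟨-, -, h2⟩ | ⟨⟨-, h1⟩, -, h2⟩
          · exact h2
          · rw [← h1, h2]
        have hinj2 : Set.InjOn (fun j' => s(((y, j) : V1 × V2), ((y, j') : V1 × V2)))
            (G2.neighborSet j) := by
          intro a ha b hb h
          simp only [Sym2.eq_iff, Prod.mk.injEq] at h
          rcases h with ⟨-, -, h2⟩ | ⟨⟨-, h1⟩, -, h2⟩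
          · exact h2
          · rw [← h1, h2]
        have hdisj : Disjoint
            ((fun i' => s(((x, i) : V1 × V2), ((x, i') : V1 × V2))) '' (G2.neighborSet i))
            ((fun j' => s(((y, j) : V1 × V2), ((y, j') : V1 × V2))) '' (G2.neighborSet j)) := by
          rw [Set.disjoint_left]
          rintro e ⟨a, -, rfl⟩ ⟨b, -, heq⟩
          simp only [Sym2.eq_iff, Prod.mk.injEq] at heq
          rcases heq with ⟨⟨h1, -⟩, -⟩ | ⟨⟨h1, -⟩, -⟩ <;> exact hxy.ne h1.symm
        rw [hFdef, Set.ncard_union_eq hdisj (Set.toFinite _) (Set.toFinite _),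
          Set.ncard_image_of_injOn hinj1, Set.ncard_image_of_injOn hinj2,
          hr2 i, hr2 j, two_mul]
      exact Nat.sInf_le ⟨F, ⟨hFsub, hFdis, hFiso⟩, hcard⟩
end

section
/- Let G1 be a connected δ1-regular graph on n vertices with δ1 ≥ 4, G2 be a connected δ2-regular graph on δ1 vertices, write κ1 = κ(G1), λ2 = λ(G2), λ2' = λ'(G2), and let G = G1®G2. Let F be a minimum restricted edge-cut of G and let {X1, X2, …, Xn} be the partition of V(G) into the n copies of G2 (so the subgraph induced by each Xi is isomorphic to G2). If for some i the induced subgraph G[Xi] is disconnected in G−F, then λ'(G) ≥ min{κ1+λ2−1, 2λ2, λ2'+2}. -/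
open SimpleGraph

section Aux

variable {V : Type*}

lemma mem_of_reach {G : SimpleGraph V} {S : Set V}
    (hS : ∀ ⦃u v⦄, u ∈ S → G.Adj u v → v ∈ S) {u v : V}
    (h : G.Reachable u v) (hu : u ∈ S) : v ∈ S := by
  obtain ⟨w⟩ := h
  induction w with
  | nil => exact hu
  | cons h p ih => exact ih (hS hu h)

lemma not_connected_of_closed {G : SimpleGraph V} {S : Set V}
    (hS : ∀ ⦃u v⦄, u ∈ S → G.Adj u v → v ∈ S) {u w : V}
    (hu : u ∈ S) (hw : w ∉ S) : ¬G.Connected := fun h =>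
  hw (mem_of_reach hS (h.preconnected u w) hu)

lemma mem_edgeBoundary_of {G : SimpleGraph V} {A : Set V} {u v : V}
    (h : G.Adj u v) (hu : u ∈ A) (hv : v ∉ A) : s(u, v) ∈ edgeBoundary G A :=
  ⟨G.mem_edgeSet.2 h, u, hu, v, hv, rfl⟩

lemma edgeBoundary_elim {G : SimpleGraph V} {A : Set V} {e : Sym2 V}
    (he : e ∈ edgeBoundary G A) : ∃ u v, G.Adj u v ∧ u ∈ A ∧ v ∉ A ∧ e = s(u, v) := by
  obtain ⟨hE, u, hu, v, hv, rfl⟩ := he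
  exact ⟨u, v, G.mem_edgeSet.1 hE, hu, hv, rfl⟩

lemma edgeBoundary_sides {G : SimpleGraph V} {A : Set V} {p q : V}
    (h : s(p, q) ∈ edgeBoundary G A) : (p ∈ A ∧ q ∉ A) ∨ (q ∈ A ∧ p ∉ A) := by
  obtain ⟨u, v, hadj, hu, hv, he⟩ := edgeBoundary_elim h
  rw [Sym2.eq_iff] at he
  rcases he with ⟨h1, h2⟩ | ⟨h1, h2⟩
  · exact Or.inl ⟨h1 ▸ hu, h2 ▸ hv⟩
  · exact Or.inr ⟨h2 ▸ hu, h1 ▸ hv⟩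

lemma closed_deleteEdges_edgeBoundary (G : SimpleGraph V) (A : Set V) :
    ∀ ⦃u v⦄, u ∈ A → (G.deleteEdges (edgeBoundary G A)).Adj u v → v ∈ A := by
  intro u v hu hadj
  rw [SimpleGraph.deleteEdges_adj] at hadj
  by_contra hv
  exact hadj.2 (mem_edgeBoundary_of hadj.1 hu hv)

lemma edgeBoundary_subset_edgeSet (G : SimpleGraph V) (A : Set V) :
    edgeBoundary G A ⊆ G.edgeSet := fun _ he => he.1

lemma not_connected_deleteEdges_edgeBoundary {G : SimpleGraph V} {A : Set V}
    {a b : V} (ha : a ∈ A) (hb : b ∉ A) : ¬(G.deleteEdges (edgeBoundary G A)).Connected :=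
  not_connected_of_closed (closed_deleteEdges_edgeBoundary G A) ha hb

lemma edgeConn_le_ncard_edgeBoundary (G : SimpleGraph V) {A : Set V}
    {a b : V} (ha : a ∈ A) (hb : b ∉ A) :
    edgeConn G ≤ (edgeBoundary G A).ncard :=
  Nat.sInf_le ⟨edgeBoundary G A, edgeBoundary_subset_edgeSet G A, rfl,
    not_connected_deleteEdges_edgeBoundary ha hb⟩

lemma restrictedEdgeConn_le_ncard_edgeBoundary (G : SimpleGraph V) {A : Set V}
    {a b : V} (ha : a ∈ A) (hb : b ∉ A)
    (hiso : ∀ v : V, ∃ w : V, (G.deleteEdges (edgeBoundary G A)).Adj v w) :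
    restrictedEdgeConn G ≤ (edgeBoundary G A).ncard :=
  Nat.sInf_le ⟨edgeBoundary G A, ⟨edgeBoundary_subset_edgeSet G A,
    not_connected_deleteEdges_edgeBoundary ha hb, hiso⟩, rfl⟩

lemma vertexConn_le (G : SimpleGraph V) {S : Set V}
    (h : ¬(G.induce (Sᶜ : Set V)).Connected ∨ (Sᶜ : Set V).ncard ≤ 1) :
    vertexConn G ≤ S.ncard :=
  Nat.sInf_le ⟨S, rfl, h⟩

lemma ncard_edgeBoundary_singleton [Finite V] (G : SimpleGraph V) (i : V) :
    (edgeBoundary G {i}).ncard = (G.neighborSet i).ncard := by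
  have himg : edgeBoundary G {i} = (fun w => s(i, w)) '' (G.neighborSet i) := by
    ext e
    constructor
    · rintro ⟨he, u, hu, v, hv, rfl⟩
      rcases hu with rfl
      exact ⟨v, he, rfl⟩
    · rintro ⟨w, hw, rfl⟩
      refine ⟨G.mem_edgeSet.2 hw, i, rfl, w, ?_, rfl⟩
      intro h; rcases h with h
      exact G.loopless.irrefl i (h ▸ hw)
  rw [himg, Set.ncard_image_of_injOn]
  intro a ha b hb hab
  rw [Sym2.eq_iff] at hab
  rcases hab with ⟨-, h⟩ | ⟨h1, h2⟩
  · exact h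
  · rw [h2] at ha
    exact absurd ha (G.loopless.irrefl i)

lemma ncard_neighborSet_le [Finite V] (G : SimpleGraph V) (i : V) :
    (G.neighborSet i).ncard ≤ Nat.card V - 1 := by
  have h1 : G.neighborSet i ⊆ {i}ᶜ := fun w hw => by
    simp only [Set.mem_compl_iff, Set.mem_singleton_iff]
    intro h; exact G.loopless.irrefl i (h ▸ hw)
  have h2 := Set.ncard_le_ncard h1 (Set.toFinite _)
  have h4 := Set.ncard_singleton i
  have := Set.ncard_add_ncard_compl ({i} : Set V)
  omega

lemma ncard_range_of_injective {W : Type*} [Finite V] (f : V → W)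
    (h : Function.Injective f) : (Set.range f).ncard = Nat.card V := by
  rw [← Set.ncard_univ, ← Set.image_univ, Set.ncard_image_of_injective _ h]

end Aux

section L4

variable {V : Type*} [Finite V]

/-- If `V = {x} ⊎ H1 ⊎ H2` with `H1, H2` nonempty, then the number of edges between
`H1` and `H2` is at least `κ(G) - 1`. -/
lemma vertexConn_le_crossing (G : SimpleGraph V) (x : V) (H1 H2 : Set V)
    (hpart : ∀ y, y = x ∨ y ∈ H1 ∨ y ∈ H2) (hx1 : x ∉ H1) (hx2 : x ∉ H2)
    (hdisj : ∀ ⦃y⦄, y ∈ H1 → y ∉ H2) (h1 : H1.Nonempty) (h2 : H2.Nonempty) :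
    vertexConn G ≤ {e | e ∈ G.edgeSet ∧ ∃ y ∈ H1, ∃ z ∈ H2, e = s(y, z)}.ncard + 1 := by
  classical
  set EB : Set (Sym2 V) := {e | e ∈ G.edgeSet ∧ ∃ y ∈ H1, ∃ z ∈ H2, e = s(y, z)} with hEB
  -- a choice function for a crossing neighbour
  let zc : V → V := fun w => if h : ∃ z ∈ H2, G.Adj w z then h.choose else w
  have hzc : ∀ w, (∃ z ∈ H2, G.Adj w z) → zc w ∈ H2 ∧ G.Adj w (zc w) := by
    intro w hw
    simp only [zc, dif_pos hw]
    exact ⟨hw.choose_spec.1, hw.choose_spec.2⟩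
  have hfInj : ∀ ⦃w⦄, w ∈ H1 → ∀ ⦃w'⦄, w' ∈ H1 →
      (∃ z ∈ H2, G.Adj w z) → (∃ z ∈ H2, G.Adj w' z) →
      s(w, zc w) = s(w', zc w') → w = w' := by
    intro w hw w' hw' hew hew' heq
    rw [Sym2.eq_iff] at heq
    rcases heq with ⟨h, -⟩ | ⟨ha, hb⟩
    · exact h
    · exact absurd (hzc w' hew').1 (hdisj (ha ▸ hw))
  by_cases hall : ∀ u ∈ H1, ∃ z ∈ H2, G.Adj u z
  · -- every vertex of H1 has a crossing edge
    obtain ⟨u0, hu0⟩ := h1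
    set Nu : Set V := {z ∈ H2 | G.Adj u0 z} with hNu
    set S : Set V := insert x ((H1 \ {u0}) ∪ Nu) with hS
    have hu0S : u0 ∉ S := by
      intro h
      rcases h with h | h | h
      · exact hx1 (h ▸ hu0)
      · exact h.2 rfl
      · exact hdisj hu0 h.1
    -- card bound : EB contains the disjoint images
    have himg1 : (fun w => s(w, zc w)) '' (H1 \ {u0}) ⊆ EB := by
      rintro e ⟨w, hw, rfl⟩
      have h := hzc w (hall w hw.1)
      exact ⟨G.mem_edgeSet.2 h.2, w, hw.1, zc w, h.1, rfl⟩
    have himg2 : (fun z => s(u0, z)) '' Nu ⊆ EB := by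
      rintro e ⟨z, hz, rfl⟩
      exact ⟨G.mem_edgeSet.2 hz.2, u0, hu0, z, hz.1, rfl⟩
    have hdisjimg : Disjoint ((fun w => s(w, zc w)) '' (H1 \ {u0}))
        ((fun z => s(u0, z)) '' Nu) := by
      rw [Set.disjoint_left]
      rintro e ⟨w, hw, rfl⟩ ⟨z, hz, heq⟩
      rw [Sym2.eq_iff] at heq
      rcases heq with ⟨h, -⟩ | ⟨ha, hb⟩
      · exact hw.2 h.symm
      · exact hdisj hw.1 (hb ▸ hz.1)

    have hinj1 : Set.InjOn (fun w => s(w, zc w)) (H1 \ {u0}) := by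
      intro w hw w' hw' heq
      exact hfInj hw.1 hw'.1 (hall w hw.1) (hall w' hw'.1) heq
    have hinj2 : Set.InjOn (fun z => s(u0, z)) Nu := by
      intro z hz z' hz' heq
      rw [Sym2.eq_iff] at heq
      rcases heq with ⟨-, h⟩ | ⟨ha, hb⟩
      · exact h
      · exact absurd (ha ▸ hu0) (fun hc => hdisj hc hz'.1)
    have hcard : (H1 \ {u0}).ncard + Nu.ncard ≤ EB.ncard := by
      have := Set.ncard_union_eq hdisjimg (Set.toFinite _) (Set.toFinite _)
      have hsub : ((fun w => s(w, zc w)) '' (H1 \ {u0})) ∪ ((fun z => s(u0, z)) '' Nu) ⊆ EB :=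
        Set.union_subset himg1 himg2
      have hle := Set.ncard_le_ncard hsub (Set.toFinite _)
      rw [this, Set.ncard_image_of_injOn hinj1, Set.ncard_image_of_injOn hinj2] at hle
      exact hle
    have hScard : S.ncard ≤ EB.ncard + 1 := by
      rw [hS]
      have h1' := Set.ncard_insert_le x ((H1 \ {u0}) ∪ Nu)
      have h2' := Set.ncard_union_le (H1 \ {u0}) Nu
      omega
    refine le_trans (vertexConn_le G ?_) hScard
    -- the complement of S is {u0} ∪ (H2 \ N(u0)) and u0 is isolated there
    by_cases hsc : ∀ v ∈ (Sᶜ : Set V), v = u0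
    · right
      calc (Sᶜ : Set V).ncard ≤ ({u0} : Set V).ncard :=
            Set.ncard_le_ncard (fun v hv => hsc v hv) (Set.toFinite _)
        _ = 1 := Set.ncard_singleton u0
    · left
      push_neg at hsc
      obtain ⟨v, hv, hvne⟩ := hsc
      refine not_connected_of_closed (S := {w : ↥(Sᶜ : Set V) | (w : V) = u0})
        (u := ⟨u0, hu0S⟩) (w := ⟨v, hv⟩) ?_ rfl hvne
      rintro ⟨a, haS⟩ ⟨b, hbS⟩ (ha : a = u0) hadj
      exfalso
      subst ha
      have hadj' : G.Adj a b := hadj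
      have hbB : b ≠ x := fun h => hbS (h ▸ Set.mem_insert x _)
      rcases hpart b with h | h | h
      · exact hbB h
      · -- b ∈ H1 : then b ∈ H1 \ {u0} ⊆ S unless b = u0
        by_cases hb0 : b = a
        · exact G.loopless.irrefl a (hb0 ▸ hadj')
        · exact hbS (Set.mem_insert_of_mem _ (Or.inl ⟨h, hb0⟩ : b ∈ (H1 \ {a}) ∪ Nu))
      · -- b ∈ H2 and adjacent to u0, so b ∈ Nu ⊆ S
        exact hbS (Set.mem_insert_of_mem _ (Or.inr ⟨h, hadj'⟩ : b ∈ (H1 \ {a}) ∪ Nu))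
  · -- some vertex of H1 has no crossing edge
    push_neg at hall
    obtain ⟨u, hu, hune⟩ := hall
    set N1 : Set V := {w ∈ H1 | ∃ z ∈ H2, G.Adj w z} with hN1
    set S : Set V := insert x N1 with hS
    have huS : u ∉ S := by
      intro h
      rcases h with h | h
      · exact hx1 (h ▸ hu)
      · obtain ⟨z, hz, hadj⟩ := h.2
        exact hune z hz hadj
    obtain ⟨z2, hz2⟩ := h2
    have hz2S : z2 ∉ S := by
      intro h
      rcases h with h | h
      · exact hx2 (h ▸ hz2)
      · exact hdisj h.1 hz2
    have hcard : N1.ncard ≤ EB.ncard := by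
      have himg : (fun w => s(w, zc w)) '' N1 ⊆ EB := by
        rintro e ⟨w, hw, rfl⟩
        have h := hzc w hw.2
        exact ⟨G.mem_edgeSet.2 h.2, w, hw.1, zc w, h.1, rfl⟩
      have hinj : Set.InjOn (fun w => s(w, zc w)) N1 := fun w hw w' hw' heq =>
        hfInj hw.1 hw'.1 hw.2 hw'.2 heq
      have hle := Set.ncard_le_ncard himg (Set.toFinite _)
      rwa [Set.ncard_image_of_injOn hinj] at hle
    have hScard : S.ncard ≤ EB.ncard + 1 := by
      rw [hS]
      have := Set.ncard_insert_le x N1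
      omega
    refine le_trans (vertexConn_le G ?_) hScard
    left
    refine not_connected_of_closed (S := {w : ↥(Sᶜ : Set V) | (w : V) ∈ H1})
      (u := ⟨u, huS⟩) (w := ⟨z2, hz2S⟩) ?_ hu (fun hc => hdisj hc hz2)
    rintro ⟨a, haS⟩ ⟨b, hbS⟩ (ha : a ∈ H1) hadj
    have hadj' : G.Adj a b := hadj
    have hbB : b ≠ x := fun h => hbS (h ▸ Set.mem_insert x _)
    rcases hpart b with h | h | h
    · exact absurd h hbB
    · exact h
    · -- b ∈ H2 : then a would be in N1 ⊆ S
      have haN : a ∈ N1 := by rw [hN1]; exact ⟨ha, b, h, hadj'⟩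
      exact absurd (Set.mem_insert_of_mem _ haN) haS

end L4

section RP

variable {V1 V2 : Type*} [Fintype V1] [Fintype V2] [Nonempty V2]
set_option linter.unusedSectionVars false

/-- The label at `y` of the edge `y z`. -/
noncomputable def labOf (ℓ : V1 → V2 → V1) (y z : V1) : V2 :=
  Classical.epsilon fun i => ℓ y i = z

variable {G1 : SimpleGraph V1} {G2 : SimpleGraph V2} {ℓ : V1 → V2 → V1} {δ1 : ℕ}

lemma range_ℓ_eq (hℓ : IsRPLabelling G1 ℓ) (hr1 : ∀ x, (G1.neighborSet x).ncard = δ1)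
    (hd : Fintype.card V2 = δ1) (y : V1) : Set.range (ℓ y) = G1.neighborSet y := by
  apply Set.eq_of_subset_of_ncard_le ?_ ?_ (Set.toFinite _)
  · rintro _ ⟨i, rfl⟩; exact hℓ.2 y i
  · rw [hr1, ncard_range_of_injective _ (hℓ.1 y), Nat.card_eq_fintype_card, hd]

lemma labOf_spec (hℓ : IsRPLabelling G1 ℓ) (hr1 : ∀ x, (G1.neighborSet x).ncard = δ1)
    (hd : Fintype.card V2 = δ1) {y z : V1} (h : G1.Adj y z) : ℓ y (labOf ℓ y z) = z := by
  have hz : z ∈ Set.range (ℓ y) := by rw [range_ℓ_eq hℓ hr1 hd]; exact h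
  obtain ⟨i, hi⟩ := hz
  exact Classical.epsilon_spec (p := fun i => ℓ y i = z) ⟨i, hi⟩

/-- The external edge of the product corresponding to an edge `y z` of `G1`. -/
noncomputable def extEdge (ℓ : V1 → V2 → V1) (y z : V1) : Sym2 (V1 × V2) :=
  s((y, labOf ℓ y z), (z, labOf ℓ z y))

lemma adj_extEdge (hℓ : IsRPLabelling G1 ℓ) (hr1 : ∀ x, (G1.neighborSet x).ncard = δ1)
    (hd : Fintype.card V2 = δ1) {y z : V1} (h : G1.Adj y z) :
    (replacementProduct G1 G2 ℓ).Adj (y, labOf ℓ y z) (z, labOf ℓ z y) :=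
  Or.inr ⟨h, labOf_spec hℓ hr1 hd h, labOf_spec hℓ hr1 hd h.symm⟩

/-- `extEdge` as a map on unordered pairs. -/
noncomputable def extMap (ℓ : V1 → V2 → V1) : Sym2 V1 → Sym2 (V1 × V2) :=
  Sym2.lift ⟨extEdge ℓ, fun _ _ => Sym2.eq_swap⟩

lemma extMap_mk (ℓ : V1 → V2 → V1) (y z : V1) :
    extMap ℓ s(y, z) = s((y, labOf ℓ y z), (z, labOf ℓ z y)) := Sym2.lift_mk ..

lemma extMap_fst (ℓ : V1 → V2 → V1) : ∀ e, Sym2.map Prod.fst (extMap ℓ e) = e := by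
  intro e
  induction e using Sym2.ind with
  | _ y z => rw [extMap_mk, Sym2.map_pair_eq]

lemma extMap_injective (ℓ : V1 → V2 → V1) : Function.Injective (extMap ℓ) := by
  intro a b h
  have := congrArg (Sym2.map Prod.fst) h
  rwa [extMap_fst, extMap_fst] at this

/-- The inclusion of the copy `X_y` on edges. -/
def copyMap (y : V1) : Sym2 V2 → Sym2 (V1 × V2) := Sym2.map (fun i => (y, i))

lemma copyMap_mk (y : V1) (i j : V2) : copyMap y s(i, j) = s((y, i), (y, j)) :=
  Sym2.map_pair_eq ..

lemma copyMap_injective (y : V1) :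
    Function.Injective (copyMap y : Sym2 V2 → Sym2 (V1 × V2)) :=
  Sym2.map.injective fun i j h => congrArg Prod.snd h

lemma copy_adj {x : V1} {i j : V2} :
    (replacementProduct G1 G2 ℓ).Adj (x, i) (x, j) ↔ G2.Adj i j := by
  constructor
  · rintro (⟨-, h⟩ | ⟨h, -⟩)
    · exact h
    · exact absurd h (G1.loopless.irrefl x)
  · intro h; exact Or.inl ⟨rfl, h⟩

lemma copy_connected (hc2 : G2.Connected) (F : Set (Sym2 (V1 × V2))) (x : V1)
    (hnoF : ∀ i j : V2, G2.Adj i j → s((x, i), (x, j)) ∉ F) :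
    (((replacementProduct G1 G2 ℓ).deleteEdges F).induce {p : V1 × V2 | p.1 = x}).Connected := by
  let e : V2 ≃ {p : V1 × V2 // p.1 = x} :=
    { toFun := fun i => ⟨(x, i), rfl⟩
      invFun := fun p => p.1.2
      left_inv := fun i => rfl
      right_inv := by
        rintro ⟨⟨y, i⟩, h⟩
        exact Subtype.ext (Prod.ext h.symm rfl) }
  have iso : G2 ≃g (((replacementProduct G1 G2 ℓ).deleteEdges F).induce
      {p : V1 × V2 | p.1 = x}) :=
    { toEquiv := e
      map_rel_iff' := by
        intro i j
        show ((replacementProduct G1 G2 ℓ).deleteEdges F).Adj (x, i) (x, j) ↔ G2.Adj i j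
        rw [SimpleGraph.deleteEdges_adj, copy_adj]
        exact ⟨fun h => h.1, fun h => ⟨h, hnoF i j h⟩⟩ }
  exact iso.connected_iff.mp hc2

end RP

section Case2b

set_option linter.unusedSectionVars false

/-- The case where `X_x` is the only split copy and all other copies lie on the side `Dᶜ`
(i.e. every other copy is inside `D`). -/
lemma case_allCopiesOneSide {V1 V2 : Type*} [Fintype V1] [Fintype V2] [Nonempty V2]
    {δ1 δ2 : ℕ}
    (G1 : SimpleGraph V1) (G2 : SimpleGraph V2) (ℓ : V1 → V2 → V1)
    (hℓ : IsRPLabelling G1 ℓ)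
    (hr1 : ∀ x : V1, (G1.neighborSet x).ncard = δ1)
    (hr2 : ∀ i : V2, (G2.neighborSet i).ncard = δ2)
    (hd : Fintype.card V2 = δ1) (hδ1 : 4 ≤ δ1)
    (F : Set (Sym2 (V1 × V2))) (D : Set (V1 × V2)) (x : V1)
    (hcross : ∀ p q, (replacementProduct G1 G2 ℓ).Adj p q → p ∈ D → q ∉ D → s(p, q) ∈ F)
    (hnbr : ∀ p, ∃ q, ((replacementProduct G1 G2 ℓ).deleteEdges F).Adj p q)
    (hcopies : ∀ y, y ≠ x → ∀ i : V2, (y, i) ∈ D)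
    (hA : ∃ i : V2, (x, i) ∈ D) (hB : ∃ j : V2, (x, j) ∉ D) :
    min (min (vertexConn G1 + edgeConn G2 - 1) (2 * edgeConn G2))
        (restrictedEdgeConn G2 + 2) ≤ F.ncard := by
  classical
  set G := replacementProduct G1 G2 ℓ with hG
  set A2 : Set V2 := {i | (x, i) ∈ D} with hA2
  set B2 : Set V2 := {i | (x, i) ∉ D} with hB2
  obtain ⟨a, ha⟩ := hA
  obtain ⟨b0, hb0⟩ := hB
  have hb0' : b0 ∉ A2 := hb0
  haveI hnt : Nontrivial V2 := Fintype.one_lt_card_iff_nontrivial.mp (by omega)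
  -- λ₂ ≤ δ₂
  have hl2d : edgeConn G2 ≤ δ2 := by
    obtain ⟨j0, hj0⟩ := exists_ne a
    have hj0' : j0 ∉ ({a} : Set V2) := fun h => hj0 h
    have := edgeConn_le_ncard_edgeBoundary G2 (A := {a}) (a := a) (b := j0) rfl hj0'
    rwa [ncard_edgeBoundary_singleton, hr2] at this
  -- δ₂ ≤ δ₁ - 1
  have hdd : δ2 ≤ δ1 - 1 := by
    have := ncard_neighborSet_le G2 a
    rwa [hr2, Nat.card_eq_fintype_card, hd] at this
  -- internal F-edges of the copy X_x
  have hIntF : copyMap x '' edgeBoundary G2 A2 ⊆ F := by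
    rintro e ⟨e', he', rfl⟩
    obtain ⟨i, j, hadj, hi, hj, rfl⟩ := edgeBoundary_elim he'
    rw [copyMap_mk]
    exact hcross _ _ (copy_adj.mpr hadj) hi hj
  have hIntFcard : (copyMap x '' edgeBoundary G2 A2).ncard = (edgeBoundary G2 A2).ncard :=
    Set.ncard_image_of_injective _ (copyMap_injective x)
  -- external F-edges of the vertices of B
  set extF : V2 → Sym2 (V1 × V2) := fun b => s((x, b), (ℓ x b, labOf ℓ (ℓ x b) x)) with hextF
  have hExtF : extF '' B2 ⊆ F := by
    rintro e ⟨b, hb, rfl⟩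
    have hyx : ℓ x b ≠ x := (hℓ.2 x b).ne'
    have hadj : G.Adj (x, b) (ℓ x b, labOf ℓ (ℓ x b) x) :=
      Or.inr ⟨hℓ.2 x b, rfl, labOf_spec hℓ hr1 hd (hℓ.2 x b).symm⟩
    have := hcross _ _ hadj.symm (hcopies _ hyx _) hb
    rwa [Sym2.eq_swap] at this
  have hExtInj : Set.InjOn extF B2 := by
    intro b hb b' hb' heq
    rw [hextF] at heq
    rw [Sym2.eq_iff] at heq
    rcases heq with ⟨h1, -⟩ | ⟨h1, -⟩
    · exact congrArg Prod.snd h1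
    · exact absurd (congrArg Prod.fst h1).symm (hℓ.2 x b').ne'
  have hExtCard : (extF '' B2).ncard = B2.ncard := Set.ncard_image_of_injOn hExtInj
  have hdisjIE : Disjoint (copyMap x '' edgeBoundary G2 A2) (extF '' B2) := by
    rw [Set.disjoint_left]
    rintro e ⟨e', he', rfl⟩ ⟨b, hb, heq⟩
    obtain ⟨i, j, hadj, hi, hj, rfl⟩ := edgeBoundary_elim he'
    rw [copyMap_mk, hextF] at heq
    rw [Sym2.eq_iff] at heq
    rcases heq with ⟨-, h2⟩ | ⟨-, h2⟩ <;>
      exact (hℓ.2 x b).ne' (congrArg Prod.fst h2)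
  -- main counting inequality
  have hFcount : (edgeBoundary G2 A2).ncard + B2.ncard ≤ F.ncard := by
    have hsub : (copyMap x '' edgeBoundary G2 A2) ∪ (extF '' B2) ⊆ F :=
      Set.union_subset hIntF hExtF
    have := Set.ncard_le_ncard hsub (Set.toFinite _)
    rwa [Set.ncard_union_eq hdisjIE (Set.toFinite _) (Set.toFinite _),
      hIntFcard, hExtCard] at this
  -- every vertex of B2 has a G2-neighbour in B2 surviving
  have hB2nbr : ∀ b ∈ B2, ∃ j ∈ B2, G2.Adj b j ∧ s(b, j) ∉ edgeBoundary G2 A2 := by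
    intro b hb
    obtain ⟨⟨q1, q2⟩, hq⟩ := hnbr (x, b)
    rw [SimpleGraph.deleteEdges_adj] at hq
    have hqD : (q1, q2) ∉ D := by
      intro hqD
      exact hq.2 (by
        have := hcross _ _ hq.1.symm hqD hb
        rwa [Sym2.eq_swap] at this)
    have hq1 : q1 = x := by
      by_contra hne
      exact hqD (hcopies _ hne _)
    subst hq1
    have hadj2 : G2.Adj b q2 := copy_adj.mp hq.1
    refine ⟨q2, hqD, hadj2, fun hmem => ?_⟩
    rcases edgeBoundary_sides hmem with ⟨h1, h2⟩ | ⟨h1, h2⟩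
    · exact hb h1
    · exact hqD h1
  have hB2two : 2 ≤ B2.ncard := by
    obtain ⟨j, hj, hadj, -⟩ := hB2nbr b0 hb0
    exact (Set.one_lt_ncard (Set.toFinite _)).mpr ⟨b0, hb0, j, hj, hadj.ne⟩
  by_cases hA1 : ∀ a' ∈ A2, a' = a
  · -- A2 = {a} : at least λ₂ internal edges and δ₁ - 1 external edges
    have hB2eq : B2 = ({a}ᶜ : Set V2) := by
      ext i
      simp only [Set.mem_compl_iff, Set.mem_singleton_iff]
      constructor
      · intro hi hia; exact hi (hia ▸ ha)
      · intro hia hiD; exact hia (hA1 i hiD)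
    have hB2card : B2.ncard = δ1 - 1 := by
      rw [hB2eq]
      have := Set.ncard_add_ncard_compl ({a} : Set V2)
      have h2 := Set.ncard_singleton a
      rw [Nat.card_eq_fintype_card, hd] at this
      omega
    have hbd : edgeConn G2 ≤ (edgeBoundary G2 A2).ncard :=
      edgeConn_le_ncard_edgeBoundary G2 ha hb0'
    have : min (min (vertexConn G1 + edgeConn G2 - 1) (2 * edgeConn G2))
        (restrictedEdgeConn G2 + 2) ≤ 2 * edgeConn G2 :=
      min_le_of_left_le (min_le_right _ _)
    omega
  · push_neg at hA1
    obtain ⟨a', ha', hane⟩ := hA1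
    by_cases hiso : ∃ c ∈ A2, ∀ w, G2.Adj c w → w ∈ B2
    · -- some vertex of A2 is isolated on its side: δ₂ + λ₂ internal edges
      obtain ⟨c, hc, hciso⟩ := hiso
      have hS1 : edgeBoundary G2 {c} ⊆ edgeBoundary G2 A2 := by
        intro e he
        obtain ⟨u, v, hadj, hu, hv, rfl⟩ := edgeBoundary_elim he
        rcases hu with rfl
        exact mem_edgeBoundary_of hadj hc (hciso v hadj)
      have hS2 : edgeBoundary G2 (A2 \ {c}) ⊆ edgeBoundary G2 A2 := by
        intro e he
        obtain ⟨u, v, hadj, hu, hv, rfl⟩ := edgeBoundary_elim he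
        refine mem_edgeBoundary_of hadj hu.1 (fun hvA => ?_)
        have hvc : v = c := by
          by_contra hvc
          exact hv ⟨hvA, hvc⟩
        subst hvc
        exact (hciso u hadj.symm) hu.1
      have hS12 : Disjoint (edgeBoundary G2 {c}) (edgeBoundary G2 (A2 \ {c})) := by
        rw [Set.disjoint_left]
        intro e he1 he2
        obtain ⟨u, v, hadj, hu, hv, rfl⟩ := edgeBoundary_elim he1
        rcases hu with rfl
        rcases edgeBoundary_sides he2 with ⟨h1, h2⟩ | ⟨h1, h2⟩
        · exact h1.2 rfl
        · exact (hciso v hadj) h1.1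
      have hcard1 : (edgeBoundary G2 {c}).ncard = δ2 := by
        rw [ncard_edgeBoundary_singleton, hr2]
      have hcard2 : edgeConn G2 ≤ (edgeBoundary G2 (A2 \ {c})).ncard := by
        have hne : ∃ w, w ∈ A2 \ {c} := by
          by_cases hac : a = c
          · exact ⟨a', ha', fun h => hane (h ▸ hac.symm ▸ rfl)⟩
          · exact ⟨a, ha, hac⟩
        obtain ⟨w, hw⟩ := hne
        exact edgeConn_le_ncard_edgeBoundary G2 hw (fun h => hb0' h.1)
      have hbig : δ2 + edgeConn G2 ≤ (edgeBoundary G2 A2).ncard := by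
        have hsub : (edgeBoundary G2 {c}) ∪ (edgeBoundary G2 (A2 \ {c})) ⊆ edgeBoundary G2 A2 :=
          Set.union_subset hS1 hS2
        have := Set.ncard_le_ncard hsub (Set.toFinite _)
        rw [Set.ncard_union_eq hS12 (Set.toFinite _) (Set.toFinite _), hcard1] at this
        omega
      have : min (min (vertexConn G1 + edgeConn G2 - 1) (2 * edgeConn G2))
          (restrictedEdgeConn G2 + 2) ≤ 2 * edgeConn G2 :=
        min_le_of_left_le (min_le_right _ _)
      omega
    · -- no isolated vertex : restricted edge-cut of G2, plus ≥ 2 external edges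
      push_neg at hiso
      have hniso : ∀ c ∈ A2, ∃ w, G2.Adj c w ∧ w ∈ A2 := by
        intro c hc
        obtain ⟨w, hw1, hw2⟩ := hiso c hc
        exact ⟨w, hw1, not_not.mp hw2⟩
      have hrc : restrictedEdgeConn G2 ≤ (edgeBoundary G2 A2).ncard := by
        refine restrictedEdgeConn_le_ncard_edgeBoundary G2 ha hb0' (fun v => ?_)
        by_cases hv : v ∈ A2
        · obtain ⟨w, hadj, hwA⟩ := hniso v hv
          refine ⟨w, ?_⟩
          rw [SimpleGraph.deleteEdges_adj]
          refine ⟨hadj, fun hmem => ?_⟩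
          rcases edgeBoundary_sides hmem with ⟨h1, h2⟩ | ⟨h1, h2⟩
          · exact h2 hwA
          · exact h2 hv
        · obtain ⟨j, hj, hadj, hnmem⟩ := hB2nbr v hv
          refine ⟨j, ?_⟩
          rw [SimpleGraph.deleteEdges_adj]
          exact ⟨hadj, hnmem⟩
      have : min (min (vertexConn G1 + edgeConn G2 - 1) (2 * edgeConn G2))
          (restrictedEdgeConn G2 + 2) ≤ restrictedEdgeConn G2 + 2 :=
        min_le_right _ _
      omega

end Case2b

/-- Lemma 4.3. Let `G1` be a connected `δ1`-regular graph on `n` vertices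
with `δ1 ≥ 4`, `G2` a connected `δ2`-regular graph on `δ1` vertices, and
`G = G1 ® G2`. Let `F` be a minimum restricted edge-cut of `G`. If for some vertex `x` of
`G1` the copy `{x} × V(G2)` of `G2` induces a disconnected subgraph of `G - F`, then
`λ'(G) ≥ min {κ1 + λ2 - 1, 2·λ2, λ2' + 2}`. -/
theorem restrictedEdgeConn_replacementProduct_lower_of_copy_disconnected
    {V1 V2 : Type*} [Fintype V1] [Fintype V2] {n δ1 δ2 : ℕ}
    (G1 : SimpleGraph V1) (G2 : SimpleGraph V2) (ℓ : V1 → V2 → V1)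
    (hℓ : IsRPLabelling G1 ℓ)
    (hc1 : G1.Connected) (hc2 : G2.Connected)
    (hr1 : ∀ x : V1, (G1.neighborSet x).ncard = δ1)
    (hr2 : ∀ i : V2, (G2.neighborSet i).ncard = δ2)
    (hn : Fintype.card V1 = n) (hd : Fintype.card V2 = δ1)
    (hδ1 : 4 ≤ δ1)
    (F : Set (Sym2 (V1 × V2)))
    (hF : IsRestrictedEdgeCut (replacementProduct G1 G2 ℓ) F)
    (hFmin : F.ncard = restrictedEdgeConn (replacementProduct G1 G2 ℓ))
    (hdisc : ∃ x : V1, ¬(((replacementProduct G1 G2 ℓ).deleteEdges F).induce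
      {p : V1 × V2 | p.1 = x}).Connected) :
    min (min (vertexConn G1 + edgeConn G2 - 1) (2 * edgeConn G2))
        (restrictedEdgeConn G2 + 2)
      ≤ restrictedEdgeConn (replacementProduct G1 G2 ℓ) := by
  classical
  haveI : Nonempty V2 := Fintype.card_pos_iff.mp (by omega)
  haveI : Nonempty V1 := hc1.nonempty
  set G := replacementProduct G1 G2 ℓ with hGdef
  rw [← hFmin]
  -- `F` is the edge boundary of a union of components `C` of `G - F`
  have hnc := hF.2.1
  rw [SimpleGraph.connected_iff] at hnc
  push_neg at hnc
  have hpre : ¬(G.deleteEdges F).Preconnected := fun hp =>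
    (hnc hp).false (Classical.arbitrary _)
  rw [SimpleGraph.Preconnected] at hpre
  push_neg at hpre
  obtain ⟨u, w, huw⟩ := hpre
  set C : Set (V1 × V2) := {v | (G.deleteEdges F).Reachable u v} with hC
  have hCclosed : ∀ ⦃p q⦄, p ∈ C → (G.deleteEdges F).Adj p q → q ∈ C :=
    fun p q hp hadj => hp.trans hadj.reachable
  have huC : u ∈ C := SimpleGraph.Reachable.refl u
  have hwC : w ∉ C := huw
  have hsubF : edgeBoundary G C ⊆ F := by
    intro e he
    obtain ⟨p, q, hadj, hp, hq, rfl⟩ := edgeBoundary_elim he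
    by_contra hne
    exact hq (hCclosed hp (by rw [SimpleGraph.deleteEdges_adj]; exact ⟨hadj, hne⟩))
  have hrc : IsRestrictedEdgeCut G (edgeBoundary G C) := by
    refine ⟨edgeBoundary_subset_edgeSet G C,
      not_connected_deleteEdges_edgeBoundary huC hwC, fun v => ?_⟩
    obtain ⟨q, hq⟩ := hF.2.2 v
    rw [SimpleGraph.deleteEdges_adj] at hq
    refine ⟨q, ?_⟩
    rw [SimpleGraph.deleteEdges_adj]
    exact ⟨hq.1, fun hmem => hq.2 (hsubF hmem)⟩
  have hFle : F.ncard ≤ (edgeBoundary G C).ncard := by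
    rw [hFmin]; exact Nat.sInf_le ⟨edgeBoundary G C, hrc, rfl⟩
  have hFeq : edgeBoundary G C = F :=
    Set.eq_of_subset_of_ncard_le hsubF hFle (Set.toFinite _)
  have hcrossC : ∀ p q, G.Adj p q → p ∈ C → q ∉ C → s(p, q) ∈ F :=
    fun p q hadj hp hq => hsubF (mem_edgeBoundary_of hadj hp hq)
  have hsides : ∀ p q : V1 × V2, s(p, q) ∈ F → (p ∈ C ∧ q ∉ C) ∨ (q ∈ C ∧ p ∉ C) := by
    intro p q h
    exact edgeBoundary_sides (by rw [hFeq]; exact h)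
  obtain ⟨x, hx⟩ := hdisc
  have hxA : ∃ i, (x, i) ∈ C := by
    by_contra hA
    push_neg at hA
    refine hx (copy_connected hc2 F x ?_)
    intro i j hadj hmem
    rcases hsides _ _ hmem with ⟨h1, -⟩ | ⟨h1, -⟩
    · exact hA i h1
    · exact hA j h1
  have hxB : ∃ j, (x, j) ∉ C := by
    by_contra hB
    push_neg at hB
    refine hx (copy_connected hc2 F x ?_)
    intro i j hadj hmem
    rcases hsides _ _ hmem with ⟨-, h2⟩ | ⟨-, h2⟩
    · exact h2 (hB j)
    · exact h2 (hB i)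
  have hcopyF : ∀ y : V1, copyMap y '' edgeBoundary G2 {i | (y, i) ∈ C} ⊆ F := by
    rintro y e ⟨e', he', rfl⟩
    obtain ⟨i, j, hadj, hi, hj, rfl⟩ := edgeBoundary_elim he'
    rw [copyMap_mk]
    exact hcrossC _ _ (copy_adj.mpr hadj) hi hj
  have hcopycard : ∀ y : V1, (∃ i, (y, i) ∈ C) → (∃ j, (y, j) ∉ C) →
      edgeConn G2 ≤ (edgeBoundary G2 {i | (y, i) ∈ C}).ncard := by
    rintro y ⟨i, hi⟩ ⟨j, hj⟩
    exact edgeConn_le_ncard_edgeBoundary G2 (a := i) (b := j) hi hj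
  by_cases hsplit : ∃ y, y ≠ x ∧ (∃ i, (y, i) ∈ C) ∧ (∃ j, (y, j) ∉ C)
  · -- a second split copy gives 2λ₂ edges
    obtain ⟨y, hyx, hyA, hyB⟩ := hsplit
    have hdisjxy : Disjoint (copyMap x '' edgeBoundary G2 {i | (x, i) ∈ C})
        (copyMap y '' edgeBoundary G2 {i | (y, i) ∈ C}) := by
      rw [Set.disjoint_left]
      rintro e ⟨e1, he1, rfl⟩ ⟨e2, he2, heq⟩
      obtain ⟨i1, j1, -, -, -, rfl⟩ := edgeBoundary_elim he1
      obtain ⟨i2, j2, -, -, -, rfl⟩ := edgeBoundary_elim he2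
      rw [copyMap_mk, copyMap_mk, Sym2.eq_iff] at heq
      rcases heq with ⟨h1, -⟩ | ⟨h1, -⟩ <;> exact hyx (congrArg Prod.fst h1)
    have h1c := hcopycard x hxA hxB
    have h2c := hcopycard y hyA hyB
    have hsub : (copyMap x '' edgeBoundary G2 {i | (x, i) ∈ C}) ∪
        (copyMap y '' edgeBoundary G2 {i | (y, i) ∈ C}) ⊆ F :=
      Set.union_subset (hcopyF x) (hcopyF y)
    have hcount := Set.ncard_le_ncard hsub (Set.toFinite _)
    rw [Set.ncard_union_eq hdisjxy (Set.toFinite _) (Set.toFinite _),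
      Set.ncard_image_of_injective _ (copyMap_injective x),
      Set.ncard_image_of_injective _ (copyMap_injective y)] at hcount
    have hmin : min (min (vertexConn G1 + edgeConn G2 - 1) (2 * edgeConn G2))
        (restrictedEdgeConn G2 + 2) ≤ 2 * edgeConn G2 :=
      min_le_of_left_le (min_le_right _ _)
    omega
  · push_neg at hsplit
    have hdich : ∀ y, y ≠ x → (∀ i, (y, i) ∈ C) ∨ (∀ i, (y, i) ∉ C) := by
      intro y hy
      by_cases hA : ∃ i, (y, i) ∈ C
      · exact Or.inl (hsplit y hy hA)
      · right; push_neg at hA; exact hA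
    by_cases h2e : ∃ y, y ≠ x ∧ ∀ i, (y, i) ∉ C
    · obtain ⟨y2, hy2x, hy2⟩ := h2e
      by_cases h1e : ∃ y, y ≠ x ∧ ∀ i, (y, i) ∈ C
      · -- both H1 and H2 nonempty, X_x the only split copy
        obtain ⟨y1, hy1x, hy1⟩ := h1e
        set H1 : Set V1 := {y | y ≠ x ∧ ∀ i, (y, i) ∈ C} with hH1
        set H2 : Set V1 := {y | y ≠ x ∧ ∀ i, (y, i) ∉ C} with hH2
        set EB : Set (Sym2 V1) := {e | e ∈ G1.edgeSet ∧ ∃ y ∈ H1, ∃ z ∈ H2, e = s(y, z)}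
          with hEB
        have hdisjH : ∀ ⦃y⦄, y ∈ H1 → y ∉ H2 := by
          intro y h1 h2
          exact h2.2 (Classical.arbitrary V2) (h1.2 _)
        have hpart : ∀ y, y = x ∨ y ∈ H1 ∨ y ∈ H2 := by
          intro y
          by_cases hy : y = x
          · exact Or.inl hy
          · rcases hdich y hy with h | h
            · exact Or.inr (Or.inl ⟨hy, h⟩)
            · exact Or.inr (Or.inr ⟨hy, h⟩)
        have hK := vertexConn_le_crossing G1 x H1 H2 hpart (fun h => h.1 rfl)
          (fun h => h.1 rfl) hdisjH ⟨y1, hy1x, hy1⟩ ⟨y2, hy2x, hy2⟩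
        rw [← hEB] at hK
        have hext : extMap ℓ '' EB ⊆ F := by
          rintro e ⟨e', he', rfl⟩
          obtain ⟨hE, y, hy, z, hz, rfl⟩ := he'
          rw [extMap_mk]
          exact hcrossC _ _ (adj_extEdge hℓ hr1 hd (G1.mem_edgeSet.1 hE)) (hy.2 _) (hz.2 _)
        have hdisjex : Disjoint (copyMap x '' edgeBoundary G2 {i | (x, i) ∈ C})
            (extMap ℓ '' EB) := by
          rw [Set.disjoint_left]
          rintro e ⟨e1, he1, rfl⟩ ⟨e2, he2, heq⟩
          obtain ⟨i1, j1, -, -, -, rfl⟩ := edgeBoundary_elim he1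
          obtain ⟨hE, y, hy, z, hz, rfl⟩ := he2
          rw [copyMap_mk, extMap_mk, Sym2.eq_iff] at heq
          rcases heq with ⟨h1, -⟩ | ⟨h1, -⟩ <;> exact hy.1 (congrArg Prod.fst h1)
        have hcnt : edgeConn G2 + EB.ncard ≤ F.ncard := by
          have hsub : (copyMap x '' edgeBoundary G2 {i | (x, i) ∈ C}) ∪ (extMap ℓ '' EB) ⊆ F :=
            Set.union_subset (hcopyF x) hext
          have h := Set.ncard_le_ncard hsub (Set.toFinite _)
          rw [Set.ncard_union_eq hdisjex (Set.toFinite _) (Set.toFinite _),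
            Set.ncard_image_of_injective _ (copyMap_injective x),
            Set.ncard_image_of_injective _ (extMap_injective ℓ)] at h
          have := hcopycard x hxA hxB
          omega
        have hmin : min (min (vertexConn G1 + edgeConn G2 - 1) (2 * edgeConn G2))
            (restrictedEdgeConn G2 + 2) ≤ vertexConn G1 + edgeConn G2 - 1 :=
          min_le_of_left_le (min_le_left _ _)
        omega
      · -- all other copies lie outside C : use `D = Cᶜ`
        push_neg at h1e
        have hcopies : ∀ y, y ≠ x → ∀ i : V2, (y, i) ∈ (Cᶜ : Set (V1 × V2)) := by
          intro y hy i
          rcases hdich y hy with h | h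
          · obtain ⟨i0, hi0⟩ := h1e y hy
            exact absurd (h i0) hi0
          · exact h i
        have hcross' : ∀ p q, G.Adj p q → p ∈ (Cᶜ : Set (V1 × V2)) →
            q ∉ (Cᶜ : Set (V1 × V2)) → s(p, q) ∈ F := by
          intro p q hadj hp hq
          have := hcrossC q p hadj.symm (not_not.mp hq) hp
          rwa [Sym2.eq_swap] at this
        refine case_allCopiesOneSide G1 G2 ℓ hℓ hr1 hr2 hd hδ1 F Cᶜ x hcross' hF.2.2
          hcopies ?_ ?_
        · obtain ⟨j, hj⟩ := hxB; exact ⟨j, hj⟩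
        · obtain ⟨i, hi⟩ := hxA; exact ⟨i, not_not_intro hi⟩
    · -- all other copies lie inside C : use `D = C`
      push_neg at h2e
      have hcopies : ∀ y, y ≠ x → ∀ i : V2, (y, i) ∈ C := by
        intro y hy i
        rcases hdich y hy with h | h
        · exact h i
        · obtain ⟨i0, hi0⟩ := h2e y hy
          exact absurd (h i0) (not_not_intro hi0)
      exact case_allCopiesOneSide G1 G2 ℓ hℓ hr1 hr2 hd hδ1 F C x hcrossC hF.2.2
        hcopies hxA hxB
end
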